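/- arXiv:math/9411209 — 3 statements merged into one kernel-verified Lean document; each statement's English description precedes it below -/
import Mathlib

section
/- Let I be an ideal of A. If G is an SG-basis for I, then G generates I as an ideal of A, i.e., I = ⟨G⟩_A. -/
set_option synthInstance.maxHeartbeats 1000000
set_option maxHeartbeats 1000000


open MvPolynomial

/-- A term order on the monomials (exponent vectors) of a polynomial ring in `n`
variables: a well-founded linear order compatible with multiplication of power
products (i.e. with addition of exponent vectors). -/
structure TermOrder (n : ℕ) where
  lo : LinearOrder (Fin n →₀ ℕ)
  wf : WellFounded lo.lt
  add_le_add : ∀ a b c : Fin n →₀ ℕ, lo.le a b → lo.le (a + c) (b + c)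

namespace TermOrder

variable {n : ℕ} {R : Type*} [CommRing R]

/-- `lp p`: the leading power product (exponent vector) of `p`; junk value `0`
for the zero polynomial. -/
noncomputable def lp (ord : TermOrder n) (p : MvPolynomial (Fin n) R) : Fin n →₀ ℕ :=
  WithBot.unbotD 0 (@Finset.max _ ord.lo p.support)

/-- `lc p`: the leading coefficient of `p` (0 if `p = 0`). -/
noncomputable def lc (ord : TermOrder n) (p : MvPolynomial (Fin n) R) : R :=
  p.coeff (ord.lp p)

/-- `ltm p`: the leading term `lc(p)·lp(p)` of `p` (0 if `p = 0`). -/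
noncomputable def ltm (ord : TermOrder n) (p : MvPolynomial (Fin n) R) : MvPolynomial (Fin n) R :=
  monomial (ord.lp p) (ord.lc p)

end TermOrder

namespace TermOrder
variable {n : ℕ} {R : Type*} [CommRing R] (ord : TermOrder n)

set_option linter.unusedSectionVars false

lemma lp_eq_max' {p : MvPolynomial (Fin n) R} (hp : p ≠ 0) :
    ord.lp p = @Finset.max' _ ord.lo p.support (MvPolynomial.support_nonempty.2 hp) := by
  rw [lp, ← @Finset.coe_max' _ ord.lo _ (MvPolynomial.support_nonempty.2 hp),
    WithBot.unbotD_coe]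

lemma lp_mem_support {p : MvPolynomial (Fin n) R} (hp : p ≠ 0) : ord.lp p ∈ p.support := by
  rw [ord.lp_eq_max' hp]
  exact @Finset.max'_mem _ ord.lo _ _

lemma le_lp {p : MvPolynomial (Fin n) R} {β : Fin n →₀ ℕ} (hβ : β ∈ p.support) :
    ord.lo.le β (ord.lp p) := by
  have hne : p ≠ 0 := by
    intro h; rw [h] at hβ; simp at hβ
  rw [ord.lp_eq_max' hne]
  exact @Finset.le_max' _ ord.lo _ _ hβ

lemma coeff_eq_zero_of_lp_lt {p : MvPolynomial (Fin n) R} {γ : Fin n →₀ ℕ}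
    (h : ord.lo.lt (ord.lp p) γ) : p.coeff γ = 0 := by
  by_contra hc
  exact absurd (@lt_of_le_of_lt _ ord.lo.toPreorder _ _ _
    (ord.le_lp (MvPolynomial.mem_support_iff.2 hc)) h) (@lt_irrefl _ ord.lo.toPreorder _)

lemma lc_ne_zero {p : MvPolynomial (Fin n) R} (hp : p ≠ 0) : ord.lc p ≠ 0 := by
  have := ord.lp_mem_support hp
  rwa [MvPolynomial.mem_support_iff] at this

lemma ltm_zero : ord.ltm (0 : MvPolynomial (Fin n) R) = 0 := by
  simp [ltm, lc]

lemma lt_add_right {a b : Fin n →₀ ℕ} (c : Fin n →₀ ℕ) (h : ord.lo.lt a b) :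
    ord.lo.lt (a + c) (b + c) := by
  refine @lt_of_le_of_ne _ ord.lo.toPartialOrder _ _ (ord.add_le_add a b c (@le_of_lt _ ord.lo.toPreorder _ _ h)) (fun e => absurd (add_right_cancel e) (@ne_of_lt _ ord.lo.toPreorder _ _ h))

section Domain
variable [IsDomain R]

lemma le_lp_add_lp {p q : MvPolynomial (Fin n) R} {γ : Fin n →₀ ℕ}
    (hγ : γ ∈ (p * q).support) : ord.lo.le γ (ord.lp p + ord.lp q) := by
  have hc : (p * q).coeff γ ≠ 0 := MvPolynomial.mem_support_iff.1 hγ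
  rw [MvPolynomial.coeff_mul] at hc
  obtain ⟨x, hx, hx0⟩ := Finset.exists_ne_zero_of_sum_ne_zero hc
  have h1 : x.1 ∈ p.support := MvPolynomial.mem_support_iff.2 (left_ne_zero_of_mul hx0)
  have h2 : x.2 ∈ q.support := MvPolynomial.mem_support_iff.2 (right_ne_zero_of_mul hx0)
  have hsum : x.1 + x.2 = γ := Finset.HasAntidiagonal.mem_antidiagonal.1 hx
  rw [← hsum]
  refine @le_trans _ ord.lo.toPreorder _ _ _ (ord.add_le_add _ _ _ (ord.le_lp h1)) ?_
  rw [add_comm (ord.lp p) x.2, add_comm (ord.lp p) (ord.lp q)]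
  exact ord.add_le_add _ _ _ (ord.le_lp h2)

lemma coeff_lp_add_lp (p q : MvPolynomial (Fin n) R) (hp : p ≠ 0) (hq : q ≠ 0) :
    (p * q).coeff (ord.lp p + ord.lp q) = ord.lc p * ord.lc q := by
  have hmem : (ord.lp p, ord.lp q) ∈ Finset.HasAntidiagonal.antidiagonal (ord.lp p + ord.lp q) :=
    Finset.HasAntidiagonal.mem_antidiagonal.2 rfl
  rw [MvPolynomial.coeff_mul,
    show ord.lc p * ord.lc q = p.coeff (ord.lp p) * q.coeff (ord.lp q) from rfl]
  apply Finset.sum_eq_single_of_mem _ hmem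
  rintro ⟨c, d⟩ hb hne
  have hsum : c + d = ord.lp p + ord.lp q := Finset.HasAntidiagonal.mem_antidiagonal.1 hb
  by_contra h0
  have hc : c ∈ p.support := MvPolynomial.mem_support_iff.2 (left_ne_zero_of_mul h0)
  have hd : d ∈ q.support := MvPolynomial.mem_support_iff.2 (right_ne_zero_of_mul h0)
  rcases eq_or_ne c (ord.lp p) with hcp | hcp
  · subst hcp
    have : d = ord.lp q := add_left_cancel hsum
    exact hne (by rw [this])
  · have h1 : ord.lo.lt c (ord.lp p) :=
      @lt_of_le_of_ne _ ord.lo.toPartialOrder _ _ (ord.le_lp hc) hcp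
    have h2 : ord.lo.lt (c + d) (ord.lp p + d) := ord.lt_add_right d h1
    have h3 : ord.lo.le (ord.lp p + d) (ord.lp p + ord.lp q) := by
      rw [add_comm (ord.lp p) d, add_comm (ord.lp p) (ord.lp q)]
      exact ord.add_le_add _ _ _ (ord.le_lp hd)
    rw [hsum] at h2
    exact absurd (@lt_of_lt_of_le _ ord.lo.toPreorder _ _ _ h2 h3)
      (@lt_irrefl _ ord.lo.toPreorder _)

lemma lp_mul {p q : MvPolynomial (Fin n) R} (hp : p ≠ 0) (hq : q ≠ 0) :
    ord.lp (p * q) = ord.lp p + ord.lp q := by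
  have hpq : p * q ≠ 0 := mul_ne_zero hp hq
  have hmem : ord.lp p + ord.lp q ∈ (p * q).support := by
    rw [MvPolynomial.mem_support_iff, ord.coeff_lp_add_lp p q hp hq]
    exact mul_ne_zero (ord.lc_ne_zero hp) (ord.lc_ne_zero hq)
  exact @le_antisymm _ ord.lo.toPartialOrder _ _
    (ord.le_lp_add_lp (ord.lp_mem_support hpq)) (ord.le_lp hmem)

lemma lc_mul {p q : MvPolynomial (Fin n) R} (hp : p ≠ 0) (hq : q ≠ 0) :
    ord.lc (p * q) = ord.lc p * ord.lc q := by
  rw [lc, ord.lp_mul hp hq, ord.coeff_lp_add_lp p q hp hq]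

lemma ltm_mul (p q : MvPolynomial (Fin n) R) : ord.ltm (p * q) = ord.ltm p * ord.ltm q := by
  rcases eq_or_ne p 0 with rfl | hp
  · rw [zero_mul, ord.ltm_zero, zero_mul]
  rcases eq_or_ne q 0 with rfl | hq
  · rw [mul_zero, ord.ltm_zero, mul_zero]
  rw [ltm, ltm, ltm, ord.lp_mul hp hq, ord.lc_mul hp hq, MvPolynomial.monomial_mul]

lemma lp_one : ord.lp (1 : MvPolynomial (Fin n) R) = 0 := by
  classical
  have he : (1 : MvPolynomial (Fin n) R) = monomial 0 1 := by
    rw [MvPolynomial.monomial_zero', map_one]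
  have h1 : (1 : MvPolynomial (Fin n) R).support = {0} := by
    rw [he, MvPolynomial.support_monomial]
    simp
  have : ord.lp (1 : MvPolynomial (Fin n) R) ∈ ({0} : Finset (Fin n →₀ ℕ)) := by
    rw [← h1]; exact ord.lp_mem_support one_ne_zero
  simpa using this

lemma ltm_one : ord.ltm (1 : MvPolynomial (Fin n) R) = 1 := by
  rw [ltm, ord.lp_one, lc, ord.lp_one]
  simp [MvPolynomial.coeff_zero_one]

end Domain

end TermOrder


variable {n : ℕ} {R : Type*} [CommRing R]

/-- An `F`-power product: a finite product `∏ fᵢ^{eᵢ}` with `fᵢ ∈ F`. -/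
def IsPowerProduct (F : Set (MvPolynomial (Fin n) R)) (q : MvPolynomial (Fin n) R) : Prop :=
  ∃ e : MvPolynomial (Fin n) R →₀ ℕ, (e.support : Set (MvPolynomial (Fin n) R)) ⊆ F ∧
    q = e.prod (fun f k => f ^ k)

/-- `F` is a SAGBI basis for the `R`-subalgebra `A`: `R[Lt A] = R[Lt F]`. -/
def IsSAGBI (ord : TermOrder n) (A : Subalgebra R (MvPolynomial (Fin n) R))
    (F : Set (MvPolynomial (Fin n) R)) : Prop :=
  Algebra.adjoin R (ord.ltm '' (A : Set (MvPolynomial (Fin n) R))) =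
    Algebra.adjoin R (ord.ltm '' F)

/-- One step of s-reduction of `g` to `h` via `F`. -/
def SStep (ord : TermOrder n) (F : Set (MvPolynomial (Fin n) R))
    (g h : MvPolynomial (Fin n) R) : Prop :=
  ∃ (β : Fin n →₀ ℕ) (N : ℕ) (q : Fin N → MvPolynomial (Fin n) R) (r : Fin N → R),
    g.coeff β ≠ 0 ∧
    (∀ i, IsPowerProduct F (q i) ∧ q i ≠ 0 ∧ ord.lp (q i) = β) ∧
    g.coeff β = ∑ i, r i * ord.lc (q i) ∧
    h = g - ∑ i, C (r i) * q i

/-- `g` s-reduces to `h` via `F`: a finite chain of one-step s-reductions. -/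
def SReduce (ord : TermOrder n) (F : Set (MvPolynomial (Fin n) R)) :
    MvPolynomial (Fin n) R → MvPolynomial (Fin n) R → Prop :=
  Relation.ReflTransGen (SStep ord F)

/-- One step of si-reduction of `h` to `h'` via `G`, relative to the subalgebra `A`. -/
def SiStep (ord : TermOrder n) (A : Subalgebra R (MvPolynomial (Fin n) R))
    (G : Set (MvPolynomial (Fin n) R)) (h h' : MvPolynomial (Fin n) R) : Prop :=
  ∃ (α : Fin n →₀ ℕ) (M : ℕ) (g a : Fin M → MvPolynomial (Fin n) R),
    h.coeff α ≠ 0 ∧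
    (∀ i, g i ∈ G) ∧ (∀ i, a i ∈ A) ∧
    (∀ i, a i * g i ≠ 0 ∧ ord.lp (a i * g i) = α) ∧
    (monomial α (h.coeff α) : MvPolynomial (Fin n) R) = ∑ i, ord.ltm (a i * g i) ∧
    h' = h - ∑ i, a i * g i

/-- `h` si-reduces to `h'` via `G`: a finite chain of one-step si-reductions. -/
def SiReduce (ord : TermOrder n) (A : Subalgebra R (MvPolynomial (Fin n) R))
    (G : Set (MvPolynomial (Fin n) R)) :
    MvPolynomial (Fin n) R → MvPolynomial (Fin n) R → Prop :=
  Relation.ReflTransGen (SiStep ord A G)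

/-- The subalgebra `R[Lt A]` generated by the leading terms of elements of `A`. -/
noncomputable def LtAlg (ord : TermOrder n) (A : Subalgebra R (MvPolynomial (Fin n) R)) :
    Subalgebra R (MvPolynomial (Fin n) R) :=
  Algebra.adjoin R (ord.ltm '' (A : Set (MvPolynomial (Fin n) R)))

/-- The leading term of an element of `A`, as an element of `R[Lt A]`. -/
noncomputable def ltA (ord : TermOrder n) (A : Subalgebra R (MvPolynomial (Fin n) R))
    (a : A) : LtAlg ord A :=
  ⟨ord.ltm (a : MvPolynomial (Fin n) R), Algebra.subset_adjoin ⟨a, a.2, rfl⟩⟩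

/-- `G ⊆ I` is a SAGBI–Gröbner basis (SG-basis) for the ideal `I` of `A`:
`Lt G` generates the ideal `⟨Lt I⟩` in the subalgebra `R[Lt A]`. -/
def IsSGBasis (ord : TermOrder n) (A : Subalgebra R (MvPolynomial (Fin n) R))
    (I : Ideal A) (G : Set A) : Prop :=
  Ideal.span
      ((Subtype.val ⁻¹' (ord.ltm '' (Subtype.val '' G)) : Set (LtAlg ord A))) =
  Ideal.span
      ((Subtype.val ⁻¹' (ord.ltm '' (Subtype.val '' (I : Set A))) : Set (LtAlg ord A)))


section AuxAlg

variable {n : ℕ} {R : Type*} [CommRing R] [IsDomain R]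

/-- The image of `A` under `ltm` is a submonoid (over a domain). -/
noncomputable def ltmSubmonoid (ord : TermOrder n) (A : Subalgebra R (MvPolynomial (Fin n) R)) :
    Submonoid (MvPolynomial (Fin n) R) where
  carrier := ord.ltm '' (A : Set (MvPolynomial (Fin n) R))
  one_mem' := ⟨1, A.one_mem, ord.ltm_one⟩
  mul_mem' := by
    rintro _ _ ⟨a, ha, rfl⟩ ⟨b, hb, rfl⟩
    exact ⟨a * b, A.mul_mem ha hb, ord.ltm_mul a b⟩

lemma adjoin_ltm_rep (ord : TermOrder n) (A : Subalgebra R (MvPolynomial (Fin n) R))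
    {c : MvPolynomial (Fin n) R}
    (hc : c ∈ Algebra.adjoin R (ord.ltm '' (A : Set (MvPolynomial (Fin n) R)))) :
    ∃ (m : ℕ) (r : Fin m → R) (a : Fin m → A),
      c = ∑ i, r i • ord.ltm ↑(a i) := by
  have h2 : (Submonoid.closure (ord.ltm '' (A : Set (MvPolynomial (Fin n) R))) :
      Set (MvPolynomial (Fin n) R)) = ord.ltm '' (A : Set (MvPolynomial (Fin n) R)) := by
    rw [show ord.ltm '' (A : Set (MvPolynomial (Fin n) R))
        = (ltmSubmonoid ord A : Set (MvPolynomial (Fin n) R)) from rfl,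
      Submonoid.closure_eq]
  have h1 : c ∈ Submodule.span R (ord.ltm '' (A : Set (MvPolynomial (Fin n) R))) := by
    rw [← h2, ← Algebra.adjoin_eq_span]
    exact (Subalgebra.mem_toSubmodule _).2 hc
  obtain ⟨m, r, g, hg⟩ := Submodule.mem_span_set'.1 h1
  choose a ha hae using fun i => (g i).2
  refine ⟨m, r, fun i => ⟨a i, ha i⟩, ?_⟩
  rw [← hg]
  exact Finset.sum_congr rfl fun i _ => by rw [hae i]

lemma span_ltm_rep (ord : TermOrder n) (A : Subalgebra R (MvPolynomial (Fin n) R))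
    (G : Set A) {x : LtAlg ord A}
    (hx : x ∈ Ideal.span
      ((Subtype.val ⁻¹' (ord.ltm '' (Subtype.val '' G)) : Set (LtAlg ord A)))) :
    ∃ (ι : Type) (_ : Fintype ι) (r : ι → R) (b : ι → A),
      (∀ j, b j ∈ Ideal.span G) ∧
      (x : MvPolynomial (Fin n) R) = ∑ j, r j • ord.ltm ↑(b j) := by
  obtain ⟨m, c, t, heq⟩ := Submodule.mem_span_set'.1 hx
  have ht : ∀ i, ∃ g : A, g ∈ G ∧
      ord.ltm ↑g = ((t i : LtAlg ord A) : MvPolynomial (Fin n) R) := by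
    intro i
    obtain ⟨p, hp, hpe⟩ := (t i).2
    obtain ⟨gg, hgg, rfl⟩ := hp
    exact ⟨gg, hgg, hpe⟩
  choose g hgG hge using ht
  have hc : ∀ i, ((c i : LtAlg ord A) : MvPolynomial (Fin n) R)
      ∈ Algebra.adjoin R (ord.ltm '' (A : Set (MvPolynomial (Fin n) R))) := fun i => (c i).2
  choose m' r' a' ha' using fun i => adjoin_ltm_rep ord A (hc i)
  refine ⟨(i : Fin m) × Fin (m' i), inferInstance,
    fun j => r' j.1 j.2, fun j => a' j.1 j.2 * g j.1, fun j =>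
      Ideal.mul_mem_left _ _ (Ideal.subset_span (hgG j.1)), ?_⟩
  have hx2 : (x : MvPolynomial (Fin n) R)
      = ∑ i, ((c i : LtAlg ord A) : MvPolynomial (Fin n) R)
          * ((t i : LtAlg ord A) : MvPolynomial (Fin n) R) := by
    rw [← heq]
    push_cast
    rfl
  rw [hx2]
  rw [show (Finset.univ : Finset ((i : Fin m) × Fin (m' i)))
      = Finset.univ.sigma (fun _ => Finset.univ) from (Finset.univ_sigma_univ).symm,
    Finset.sum_sigma]
  refine Finset.sum_congr rfl fun i _ => ?_
  rw [ha' i, Finset.sum_mul]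
  refine Finset.sum_congr rfl fun k _ => ?_
  rw [smul_mul_assoc, ← hge i, ← ord.ltm_mul]
  norm_cast

end AuxAlg

/-- an SG-basis `G` for the ideal `I` of `A` generates `I`. -/
theorem isSGBasis_span_eq {n : ℕ} {R : Type*} [CommRing R] [IsDomain R]
    [IsNoetherianRing R] (ord : TermOrder n)
    (A : Subalgebra R (MvPolynomial (Fin n) R)) (I : Ideal A) (G : Set A)
    (hGI : G ⊆ (I : Set A)) (hSG : IsSGBasis ord A I G) :
    Ideal.span G = I := by
  classical
  have Hle : Ideal.span G ≤ I := Ideal.span_le.2 hGI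
  refine le_antisymm Hle ?_
  have H : ∀ μ : (Fin n →₀ ℕ), ∀ f : A, f ∈ I →
      ord.lp (f : MvPolynomial (Fin n) R) = μ → f ∈ Ideal.span G := by
    refine fun μ => ord.wf.induction
      (C := fun μ => ∀ f : A, f ∈ I →
        ord.lp (f : MvPolynomial (Fin n) R) = μ → f ∈ Ideal.span G) μ ?_
    intro μ IH f hfI hflp
    subst hflp
    rcases eq_or_ne f 0 with rfl | hf0
    · exact zero_mem _
    have hf0' : (f : MvPolynomial (Fin n) R) ≠ 0 := by
      simpa using hf0
    -- the leading term of f lies in the span of the leading terms of G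
    have hmem : (ltA ord A f) ∈ Ideal.span
        ((Subtype.val ⁻¹' (ord.ltm '' (Subtype.val '' G)) : Set (LtAlg ord A))) := by
      rw [hSG]
      exact Ideal.subset_span ⟨(f : MvPolynomial (Fin n) R), ⟨f, hfI, rfl⟩, rfl⟩
    obtain ⟨ι, _, r, b, hbG, heq⟩ := span_ltm_rep ord A G hmem
    have heq' : ord.ltm (f : MvPolynomial (Fin n) R)
        = ∑ j, r j • ord.ltm ((b j : MvPolynomial (Fin n) R)) := heq
    -- keep only the summands whose leading power product is that of f
    set J : Finset ι := Finset.univ.filter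
      (fun j => (b j : MvPolynomial (Fin n) R) ≠ 0 ∧
        ord.lp ((b j : MvPolynomial (Fin n) R)) = ord.lp (f : MvPolynomial (Fin n) R))
      with hJ
    set s : A := ∑ j ∈ J, r j • b j with hs
    have hsG : s ∈ Ideal.span G :=
      Submodule.sum_mem _ fun j _ => Submodule.smul_of_tower_mem _ (r j) (hbG j)
    have hscoe : (s : MvPolynomial (Fin n) R)
        = ∑ j ∈ J, r j • ((b j : MvPolynomial (Fin n) R)) := by
      rw [hs]
      push_cast
      rfl
    -- coefficientwise consequences of heq'
    have hcoeff : ∀ γ : Fin n →₀ ℕ, MvPolynomial.coeff γ (ord.ltm (f : MvPolynomial (Fin n) R))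
        = ∑ j, r j • MvPolynomial.coeff γ (ord.ltm ((b j : MvPolynomial (Fin n) R))) := by
      intro γ
      rw [heq', MvPolynomial.coeff_sum]
      exact Finset.sum_congr rfl fun j _ => MvPolynomial.coeff_smul γ (r j) _
    -- coefficient of s at the leading power product of f
    have hstop : MvPolynomial.coeff (ord.lp (f : MvPolynomial (Fin n) R))
        (s : MvPolynomial (Fin n) R) = ord.lc (f : MvPolynomial (Fin n) R) := by
      have h1 := hcoeff (ord.lp (f : MvPolynomial (Fin n) R))
      rw [TermOrder.ltm, MvPolynomial.coeff_monomial, if_pos rfl] at h1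
      have h2 : ∑ j, r j • MvPolynomial.coeff (ord.lp (f : MvPolynomial (Fin n) R))
          (ord.ltm ((b j : MvPolynomial (Fin n) R)))
          = ∑ j ∈ J, r j • MvPolynomial.coeff (ord.lp (f : MvPolynomial (Fin n) R))
            (ord.ltm ((b j : MvPolynomial (Fin n) R))) := by
        refine (Finset.sum_subset (Finset.subset_univ J) ?_).symm
        intro j _ hj
        rw [hJ] at hj
        simp only [Finset.mem_filter, Finset.mem_univ, true_and, not_and] at hj
        rcases eq_or_ne ((b j : MvPolynomial (Fin n) R)) 0 with hb0 | hb0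
        · rw [hb0, ord.ltm_zero, MvPolynomial.coeff_zero, smul_zero]
        · have hne := hj hb0
          rw [TermOrder.ltm, MvPolynomial.coeff_monomial, if_neg hne, smul_zero]
      have h3 : ∑ j ∈ J, r j • MvPolynomial.coeff (ord.lp (f : MvPolynomial (Fin n) R))
          (ord.ltm ((b j : MvPolynomial (Fin n) R)))
          = ∑ j ∈ J, r j • MvPolynomial.coeff (ord.lp (f : MvPolynomial (Fin n) R))
            ((b j : MvPolynomial (Fin n) R)) := by
        refine Finset.sum_congr rfl fun j hj => ?_
        rw [hJ] at hj
        simp only [Finset.mem_filter, Finset.mem_univ, true_and] at hj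
        rw [TermOrder.ltm, MvPolynomial.coeff_monomial, if_pos hj.2, TermOrder.lc, hj.2]
      rw [hscoe, MvPolynomial.coeff_sum]
      simp only [MvPolynomial.coeff_smul]
      rw [← h3, ← h2, ← h1]
    -- coefficients of s above the leading power product of f vanish
    have hshigh : ∀ γ : Fin n →₀ ℕ, ord.lo.lt (ord.lp (f : MvPolynomial (Fin n) R)) γ →
        MvPolynomial.coeff γ (s : MvPolynomial (Fin n) R) = 0 := by
      intro γ hγ
      rw [hscoe, MvPolynomial.coeff_sum]
      refine Finset.sum_eq_zero fun j hj => ?_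
      rw [hJ] at hj
      simp only [Finset.mem_filter, Finset.mem_univ, true_and] at hj
      rw [MvPolynomial.coeff_smul, ord.coeff_eq_zero_of_lp_lt (hj.2 ▸ hγ), smul_zero]
    -- the remainder h = f - s
    have hhI : f - s ∈ I := I.sub_mem hfI (Hle hsG)
    have hhcoeff : ∀ γ : Fin n →₀ ℕ,
        ¬ ord.lo.lt γ (ord.lp (f : MvPolynomial (Fin n) R)) →
        MvPolynomial.coeff γ ((f - s : A) : MvPolynomial (Fin n) R) = 0 := by
      intro γ hγ
      have hcoe : ((f - s : A) : MvPolynomial (Fin n) R)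
          = (f : MvPolynomial (Fin n) R) - (s : MvPolynomial (Fin n) R) := by push_cast; rfl
      rw [hcoe, MvPolynomial.coeff_sub]
      rcases eq_or_ne γ (ord.lp (f : MvPolynomial (Fin n) R)) with rfl | hne
      · rw [hstop, TermOrder.lc, sub_self]
      · have hlt : ord.lo.lt (ord.lp (f : MvPolynomial (Fin n) R)) γ := by
          rcases (@lt_or_ge _ ord.lo _ _ : ord.lo.lt γ (ord.lp (f : MvPolynomial (Fin n) R))
            ∨ ord.lo.le (ord.lp (f : MvPolynomial (Fin n) R)) γ) with h | h
          · exact absurd h hγ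
          · exact @lt_of_le_of_ne _ ord.lo.toPartialOrder _ _ h (Ne.symm hne)
        rw [ord.coeff_eq_zero_of_lp_lt hlt, hshigh γ hlt, sub_self]
    rcases eq_or_ne (f - s) 0 with hfs | hfs
    · have : f = s := by rwa [sub_eq_zero] at hfs
      rw [this]; exact hsG
    · have hfs' : ((f - s : A) : MvPolynomial (Fin n) R) ≠ 0 :=
        fun hcon => hfs (Subtype.ext hcon)
      have hlt : ord.lo.lt (ord.lp ((f - s : A) : MvPolynomial (Fin n) R))
          (ord.lp (f : MvPolynomial (Fin n) R)) := by
        by_contra hc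
        exact absurd (hhcoeff _ hc)
          (MvPolynomial.mem_support_iff.1 (ord.lp_mem_support hfs'))
      have hmemG : f - s ∈ Ideal.span G := IH _ hlt (f - s) hhI rfl
      have := add_mem hmemG hsG
      rwa [sub_add_cancel] at this
  exact fun f hf => H (ord.lp (f : MvPolynomial (Fin n) R)) f hf rfl
end

section
/- Suppose the R-subalgebra A of R[X] has a finite SAGBI basis. Then every ideal I of A has a finite SG-basis. -/
open MvPolynomial

variable {n : ℕ} {R : Type*} [CommRing R]

set_option maxHeartbeats 1000000 in
set_option synthInstance.maxHeartbeats 400000 in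
/-- if `A` has a finite SAGBI basis, then every ideal of `A`
has a finite SG-basis. -/
theorem exists_finite_sgbasis {n : ℕ} {R : Type*} [CommRing R] [IsDomain R]
    [IsNoetherianRing R] (ord : TermOrder n)
    (A : Subalgebra R (MvPolynomial (Fin n) R))
    (hfin : ∃ F : Set (MvPolynomial (Fin n) R),
      F.Finite ∧ F ⊆ (A : Set (MvPolynomial (Fin n) R)) ∧ IsSAGBI ord A F) :
    ∀ I : Ideal A, ∃ G : Set A, G.Finite ∧ G ⊆ (I : Set A) ∧ IsSGBasis ord A I G := by
  classical
  obtain ⟨F, hFfin, hFA, hS⟩ := hfin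
  have hFG : (LtAlg ord A).FG :=
    Subalgebra.fg_def.2 ⟨ord.ltm '' F, hFfin.image _, hS.symm⟩
  haveI hN : IsNoetherianRing (LtAlg ord A) := isNoetherianRing_of_fg hFG
  intro I
  set S : Set (LtAlg ord A) :=
    (Subtype.val ⁻¹' (ord.ltm '' (Subtype.val '' (I : Set A)))) with hSdef
  -- find a finite subset t ⊆ S with the same span
  obtain ⟨t, htS, htfin, htspan⟩ :
      ∃ t ⊆ S, t.Finite ∧ Ideal.span t = Ideal.span S := by
    have hc := (Submodule.fg_iff_compact (Ideal.span S)).mp (IsNoetherian.noetherian _)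
    have hle : Ideal.span S ≤ ⨆ x : S, Ideal.span {(x : LtAlg ord A)} := by
      rw [show (⨆ x : S, Ideal.span {(x : LtAlg ord A)}) =
            ⨆ x ∈ S, Ideal.span {x} from iSup_subtype]
      exact le_of_eq (Submodule.span_eq_iSup_of_singleton_spans S)
    obtain ⟨u, hu⟩ := CompleteLattice.IsCompactElement.exists_finset_of_le_iSup _ hc _ hle
    refine ⟨Subtype.val '' (u : Set S), by rintro x ⟨y, _, rfl⟩; exact y.2,
      (u.finite_toSet).image _, le_antisymm ?_ ?_⟩
    · exact Ideal.span_mono (by rintro x ⟨y, _, rfl⟩; exact y.2)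
    · refine le_trans hu ?_
      refine iSup_le fun x => iSup_le fun hx => ?_
      exact Ideal.span_mono (Set.singleton_subset_iff.mpr ⟨x, hx, rfl⟩)
  -- choose, for each element of t, an element of I with that leading term
  have hch : ∀ x ∈ t, ∃ a : A, a ∈ I ∧ ord.ltm (a : MvPolynomial (Fin n) R) =
      ((x : LtAlg ord A) : MvPolynomial (Fin n) R) := by
    intro x hx
    obtain ⟨p, ⟨a, haI, rfl⟩, hp⟩ := htS hx
    exact ⟨a, haI, hp⟩
  haveI := htfin.to_subtype
  let g : t → A := fun x => (hch x x.2).choose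
  have hgI : ∀ x : t, g x ∈ I := fun x => (hch x x.2).choose_spec.1
  have hglt : ∀ x : t, ord.ltm ((g x : A) : MvPolynomial (Fin n) R) =
      (((x : LtAlg ord A)) : MvPolynomial (Fin n) R) := fun x => (hch x x.2).choose_spec.2
  refine ⟨Set.range g, Set.finite_range g, by rintro a ⟨x, rfl⟩; exact hgI x, ?_⟩
  unfold IsSGBasis
  rw [← hSdef, ← htspan]
  apply le_antisymm
  · rw [htspan]
    apply Ideal.span_mono
    rintro y ⟨p, ⟨a, ⟨x, rfl⟩, rfl⟩, hy⟩
    exact ⟨((g x : A) : MvPolynomial (Fin n) R), ⟨(g x : A), hgI x, rfl⟩, hy⟩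
  · apply Ideal.span_mono
    intro x hx
    refine Set.mem_preimage.mpr ?_
    refine ⟨((g ⟨x, hx⟩ : A) : MvPolynomial (Fin n) R), ⟨(g ⟨x, hx⟩ : A), ⟨⟨x, hx⟩, rfl⟩, rfl⟩,
      hglt ⟨x, hx⟩⟩
end

section
/- Let G = {g_1,…,g_M} ⊆ A be a finite set of nonzero elements and let Q = {Q_1,…,Q_N} be an lt-generating set for LtSyz*_A(G), where Q_j = (q_{j,1},…,q_{j,M}). Then G is an SG-basis for the ideal ⟨G⟩_A if and only if for each j = 1,…,N, the element Σ_{i=1}^M q_{j,i}·g_i si-reduces to 0 via G. -/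
open MvPolynomial

variable {n : ℕ} {R : Type*} [CommRing R]

namespace SGAux

set_option maxHeartbeats 1000000
set_option synthInstance.maxHeartbeats 400000

variable {n : ℕ} (ord : TermOrder n)

/-! ### Order toolkit with explicit instances -/

theorem ole_refl (a : Fin n →₀ ℕ) : ord.lo.le a a :=
  @le_refl _ ord.lo.toPartialOrder.toPreorder a

theorem ole_trans {a b c : Fin n →₀ ℕ} (h1 : ord.lo.le a b) (h2 : ord.lo.le b c) :
    ord.lo.le a c :=
  @le_trans _ ord.lo.toPartialOrder.toPreorder a b c h1 h2

theorem ole_of_olt {a b : Fin n →₀ ℕ} (h : ord.lo.lt a b) : ord.lo.le a b :=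
  @le_of_lt _ ord.lo.toPartialOrder.toPreorder a b h

theorem olt_of_olt_of_ole {a b c : Fin n →₀ ℕ} (h1 : ord.lo.lt a b) (h2 : ord.lo.le b c) :
    ord.lo.lt a c :=
  @lt_of_lt_of_le _ ord.lo.toPartialOrder.toPreorder a b c h1 h2

theorem olt_of_ole_of_olt {a b c : Fin n →₀ ℕ} (h1 : ord.lo.le a b) (h2 : ord.lo.lt b c) :
    ord.lo.lt a c :=
  @lt_of_le_of_lt _ ord.lo.toPartialOrder.toPreorder a b c h1 h2

theorem olt_irrefl (a : Fin n →₀ ℕ) : ¬ ord.lo.lt a a :=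
  @lt_irrefl _ ord.lo.toPartialOrder.toPreorder a

theorem ne_of_olt {a b : Fin n →₀ ℕ} (h : ord.lo.lt a b) : a ≠ b :=
  @ne_of_lt _ ord.lo.toPartialOrder.toPreorder a b h

theorem not_ole {a b : Fin n →₀ ℕ} : ¬ ord.lo.le a b ↔ ord.lo.lt b a :=
  @not_le _ ord.lo a b

theorem ole_antisymm {a b : Fin n →₀ ℕ} (h1 : ord.lo.le a b) (h2 : ord.lo.le b a) : a = b :=
  @le_antisymm _ ord.lo.toPartialOrder a b h1 h2

theorem oeq_or_olt_of_ole {a b : Fin n →₀ ℕ} (h : ord.lo.le a b) : a = b ∨ ord.lo.lt a b :=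
  @Or.imp _ _ _ _ id id (@eq_or_lt_of_le _ ord.lo.toPartialOrder a b h)

theorem olt_of_ole_of_ne {a b : Fin n →₀ ℕ} (h : ord.lo.le a b) (hne : a ≠ b) :
    ord.lo.lt a b :=
  ((oeq_or_olt_of_ole ord h).resolve_left hne)

theorem ole_add_right {a b : Fin n →₀ ℕ} (c : Fin n →₀ ℕ) (h : ord.lo.le a b) :
    ord.lo.le (a + c) (b + c) := ord.add_le_add a b c h

theorem ole_add_left {a b : Fin n →₀ ℕ} (c : Fin n →₀ ℕ) (h : ord.lo.le a b) :
    ord.lo.le (c + a) (c + b) := by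
  rw [add_comm c a, add_comm c b]; exact ord.add_le_add a b c h

theorem olt_add_right {a b : Fin n →₀ ℕ} (c : Fin n →₀ ℕ) (h : ord.lo.lt a b) :
    ord.lo.lt (a + c) (b + c) :=
  olt_of_ole_of_ne ord (ole_add_right ord c (ole_of_olt ord h))
    (fun he => ne_of_olt ord h (add_right_cancel he))

theorem olt_add_left {a b : Fin n →₀ ℕ} (c : Fin n →₀ ℕ) (h : ord.lo.lt a b) :
    ord.lo.lt (c + a) (c + b) := by
  rw [add_comm c a, add_comm c b]; exact olt_add_right ord c h

theorem ole_add_both {a b c d : Fin n →₀ ℕ} (h1 : ord.lo.le a b) (h2 : ord.lo.le c d) :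
    ord.lo.le (a + c) (b + d) :=
  ole_trans ord (ole_add_right ord c h1) (ole_add_left ord b h2)


theorem zero_ole (a : Fin n →₀ ℕ) : ord.lo.le 0 a := by
  by_contra hc
  have hlt : ord.lo.lt a 0 := (not_ole ord).1 hc
  have key : ∀ k : ℕ, ord.lo.lt ((k + 2) • a) ((k + 1) • a) := by
    intro k
    have h1 : ord.lo.lt ((k + 1) • a + a) ((k + 1) • a + 0) := olt_add_left ord _ hlt
    rw [add_zero] at h1
    rw [succ_nsmul a (k + 1)]
    exact h1
  have hne : (Set.range fun k : ℕ => (k + 1) • a).Nonempty := ⟨a, 0, by simp⟩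
  obtain ⟨k, hk⟩ := (ord.wf.has_min _ hne)
  obtain ⟨k0, hk0⟩ := hk.1
  exact hk.2 ((k0 + 2) • a) ⟨k0 + 1, by ring_nf⟩ (by rw [← hk0]; exact key k0)

/-! ### Basic facts about lp, lc, ltm -/

variable {R : Type*} [CommRing R]

theorem lp_mem_support {p : MvPolynomial (Fin n) R} (hp : p ≠ 0) : ord.lp p ∈ p.support := by
  letI := ord.lo
  have h : p.support.Nonempty := by
    simpa [Finset.nonempty_iff_ne_empty] using fun h => hp (MvPolynomial.support_eq_empty.1 h)
  obtain ⟨a, ha⟩ := Finset.max_of_nonempty (α := Fin n →₀ ℕ) h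
  have : ord.lp p = a := by simp [TermOrder.lp, ha]
  rw [this]
  exact Finset.mem_of_max ha

theorem le_lp {p : MvPolynomial (Fin n) R} {β : Fin n →₀ ℕ} (hβ : β ∈ p.support) :
    ord.lo.le β (ord.lp p) := by
  letI := ord.lo
  have hne : p.support.Nonempty := ⟨β, hβ⟩
  have : ord.lp p = p.support.max' hne := by
    show WithBot.unbotD 0 (Finset.max _) = _
    rw [← Finset.coe_max' hne]
    rfl
  rw [this]
  exact Finset.le_max' _ _ hβ

theorem lc_ne_zero {p : MvPolynomial (Fin n) R} (hp : p ≠ 0) : ord.lc p ≠ 0 := by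
  have := lp_mem_support ord hp
  simpa [TermOrder.lc, MvPolynomial.mem_support_iff] using this

theorem coeff_eq_zero_of_lp_lt {p : MvPolynomial (Fin n) R} {β : Fin n →₀ ℕ}
    (h : ord.lo.lt (ord.lp p) β) : p.coeff β = 0 := by
  by_contra hc
  exact absurd (le_lp ord (MvPolynomial.mem_support_iff.2 hc)) ((not_ole ord).2 h)

@[simp] theorem lp_zero : ord.lp (0 : MvPolynomial (Fin n) R) = 0 := by
  simp [TermOrder.lp]

@[simp] theorem ltm_zero : ord.ltm (0 : MvPolynomial (Fin n) R) = 0 := by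
  simp [TermOrder.ltm, TermOrder.lc]

theorem ltm_ne_zero {p : MvPolynomial (Fin n) R} (hp : p ≠ 0) : ord.ltm p ≠ 0 := by
  simp [TermOrder.ltm, MvPolynomial.monomial_eq_zero, lc_ne_zero ord hp]

theorem ltm_eq_zero_iff {p : MvPolynomial (Fin n) R} : ord.ltm p = 0 ↔ p = 0 := by
  constructor
  · intro h
    by_contra hp
    exact ltm_ne_zero ord hp h
  · rintro rfl; simp

theorem coeff_ltm (p : MvPolynomial (Fin n) R) (β : Fin n →₀ ℕ) :
    (ord.ltm p).coeff β = if β = ord.lp p then ord.lc p else 0 := by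
  simp [TermOrder.ltm, MvPolynomial.coeff_monomial, eq_comm]

theorem coeff_ltm_lp (p : MvPolynomial (Fin n) R) :
    (ord.ltm p).coeff (ord.lp p) = ord.lc p := by
  simp [coeff_ltm]

theorem lp_monomial (d : Fin n →₀ ℕ) {c : R} (hc : c ≠ 0) :
    ord.lp (monomial d c) = d := by
  classical
  letI := ord.lo
  show WithBot.unbotD 0 (Finset.max _) = d
  rw [MvPolynomial.support_monomial, if_neg hc]
  rfl

/-! ### Boundedness of supports -/

def Bdd (δ : Fin n →₀ ℕ) (p : MvPolynomial (Fin n) R) : Prop :=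
  ∀ β ∈ p.support, ord.lo.le β δ

theorem bdd_lp (p : MvPolynomial (Fin n) R) : Bdd ord (ord.lp p) p :=
  fun _ hβ => le_lp ord hβ

theorem Bdd.coeff_eq_zero {δ β : Fin n →₀ ℕ} {p : MvPolynomial (Fin n) R}
    (h : Bdd ord δ p) (hβ : ord.lo.lt δ β) : p.coeff β = 0 := by
  by_contra hc
  exact absurd (h β (MvPolynomial.mem_support_iff.2 hc)) ((not_ole ord).2 hβ)

theorem Bdd.lp_le {δ : Fin n →₀ ℕ} {p : MvPolynomial (Fin n) R}
    (hp : p ≠ 0) (h : Bdd ord δ p) : ord.lo.le (ord.lp p) δ :=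
  h _ (lp_mem_support ord hp)

theorem Bdd.mono {δ δ' : Fin n →₀ ℕ} {p : MvPolynomial (Fin n) R}
    (h : Bdd ord δ p) (hle : ord.lo.le δ δ') : Bdd ord δ' p :=
  fun β hβ => ole_trans ord (h β hβ) hle

theorem bdd_zero (δ : Fin n →₀ ℕ) : Bdd ord δ (0 : MvPolynomial (Fin n) R) := by
  intro β hβ; simp at hβ

theorem bdd_of_lp_le {δ : Fin n →₀ ℕ} {p : MvPolynomial (Fin n) R}
    (h : ord.lo.le (ord.lp p) δ) : Bdd ord δ p :=
  (bdd_lp ord p).mono ord h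

theorem Bdd.add {δ : Fin n →₀ ℕ} {p q : MvPolynomial (Fin n) R}
    (hp : Bdd ord δ p) (hq : Bdd ord δ q) : Bdd ord δ (p + q) := by
  intro β hβ
  rcases Finset.mem_union.1 (MvPolynomial.support_add hβ) with h | h
  exacts [hp β h, hq β h]

theorem Bdd.neg {δ : Fin n →₀ ℕ} {p : MvPolynomial (Fin n) R}
    (hp : Bdd ord δ p) : Bdd ord δ (-p) := by
  intro β hβ
  rw [MvPolynomial.support_neg] at hβ
  exact hp β hβ

theorem Bdd.sub {δ : Fin n →₀ ℕ} {p q : MvPolynomial (Fin n) R}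
    (hp : Bdd ord δ p) (hq : Bdd ord δ q) : Bdd ord δ (p - q) := by
  rw [sub_eq_add_neg]; exact hp.add ord (hq.neg ord)

theorem Bdd.sum {δ : Fin n →₀ ℕ} {ι : Type*} {s : Finset ι}
    {f : ι → MvPolynomial (Fin n) R} (h : ∀ i ∈ s, Bdd ord δ (f i)) :
    Bdd ord δ (∑ i ∈ s, f i) := by
  classical
  induction s using Finset.induction_on with
  | empty => simpa using bdd_zero ord δ
  | insert _ _ hx ih =>
    rw [Finset.sum_insert hx]
    exact (h _ (Finset.mem_insert_self _ _)).add ord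
      (ih fun i hi => h i (Finset.mem_insert_of_mem hi))

theorem Bdd.mul {δ ε : Fin n →₀ ℕ} {p q : MvPolynomial (Fin n) R}
    (hp : Bdd ord δ p) (hq : Bdd ord ε q) : Bdd ord (δ + ε) (p * q) := by
  intro β hβ
  obtain ⟨u, hu, v, hv, rfl⟩ := Finset.mem_add.1 (MvPolynomial.support_mul _ _ hβ)
  exact ole_add_both ord (hp u hu) (hq v hv)

/-! ### Multiplicativity -/

theorem coeff_mul_lp_add_lp (p q : MvPolynomial (Fin n) R) :
    (p * q).coeff (ord.lp p + ord.lp q) = ord.lc p * ord.lc q := by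
  classical
  rw [MvPolynomial.coeff_mul]
  rw [Finset.sum_eq_single (ord.lp p, ord.lp q)]
  · rfl
  · rintro ⟨u, v⟩ hx hne
    rw [Finset.HasAntidiagonal.mem_antidiagonal] at hx
    by_cases hu : p.coeff u = 0
    · simp [hu]
    by_cases hv : q.coeff v = 0
    · simp [hv]
    have h1 : ord.lo.le u (ord.lp p) := le_lp ord (MvPolynomial.mem_support_iff.2 hu)
    have h2 : ord.lo.le v (ord.lp q) := le_lp ord (MvPolynomial.mem_support_iff.2 hv)
    rcases oeq_or_olt_of_ole ord h1 with rfl | h1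
    · exfalso
      exact hne (by rw [Prod.ext_iff]; exact ⟨rfl, by simpa using add_left_cancel hx⟩)
    · exfalso
      have h3 : ord.lo.lt (u + v) (ord.lp p + v) := olt_add_right ord v h1
      have h4 : ord.lo.le (ord.lp p + v) (ord.lp p + ord.lp q) := ole_add_left ord _ h2
      rw [hx] at h3
      exact olt_irrefl ord _ (olt_of_olt_of_ole ord h3 h4)
  · intro h
    simp [Finset.mem_antidiagonal] at h

variable [IsDomain R]

theorem lp_mul {p q : MvPolynomial (Fin n) R} (hp : p ≠ 0) (hq : q ≠ 0) :
    ord.lp (p * q) = ord.lp p + ord.lp q := by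
  have hc : (p * q).coeff (ord.lp p + ord.lp q) = ord.lc p * ord.lc q :=
    coeff_mul_lp_add_lp ord p q
  have hne : (p * q).coeff (ord.lp p + ord.lp q) ≠ 0 := by
    rw [hc]; exact mul_ne_zero (lc_ne_zero ord hp) (lc_ne_zero ord hq)
  refine ole_antisymm ord ?_ (le_lp ord (MvPolynomial.mem_support_iff.2 hne))
  exact ((bdd_lp ord p).mul ord (bdd_lp ord q)).lp_le ord
    (fun h0 => hne (by rw [h0]; simp))

theorem lc_mul (p q : MvPolynomial (Fin n) R) : ord.lc (p * q) = ord.lc p * ord.lc q := by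
  by_cases hp : p = 0
  · simp [hp, TermOrder.lc]
  by_cases hq : q = 0
  · simp [hq, TermOrder.lc]
  show (p * q).coeff _ = _
  rw [lp_mul ord hp hq, coeff_mul_lp_add_lp]

theorem ltm_mul (p q : MvPolynomial (Fin n) R) : ord.ltm (p * q) = ord.ltm p * ord.ltm q := by
  by_cases hp : p = 0
  · simp [hp]
  by_cases hq : q = 0
  · simp [hq]
  show monomial _ _ = _
  rw [lp_mul ord hp hq, lc_mul ord p q, TermOrder.ltm, TermOrder.ltm,
    MvPolynomial.monomial_mul]

theorem ltm_C (r : R) : ord.ltm (C r : MvPolynomial (Fin n) R) = C r := by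
  have hlp : ord.lp (C r : MvPolynomial (Fin n) R) = 0 := by
    by_cases hr : r = 0
    · simp [hr]
    · rw [MvPolynomial.C_apply, lp_monomial ord 0 hr]
  show monomial _ _ = _
  rw [hlp, TermOrder.lc, hlp]
  simp [MvPolynomial.coeff_C]

theorem smul_ltm (r : R) (b : MvPolynomial (Fin n) R) :
    r • ord.ltm b = ord.ltm (C r * b) := by
  rw [ltm_mul ord, ltm_C, MvPolynomial.smul_eq_C_mul]

theorem ltm_one : ord.ltm (1 : MvPolynomial (Fin n) R) = 1 := by
  have := ltm_C ord (1 : R)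
  simpa using this


/-! ### The leading-term algebra as a span -/

theorem ltm_mem_mul_closed {A : Subalgebra R (MvPolynomial (Fin n) R)}
    {x y : MvPolynomial (Fin n) R}
    (hx : x ∈ Submodule.span R (ord.ltm '' (A : Set (MvPolynomial (Fin n) R))))
    (hy : y ∈ Submodule.span R (ord.ltm '' (A : Set (MvPolynomial (Fin n) R)))) :
    x * y ∈ Submodule.span R (ord.ltm '' (A : Set (MvPolynomial (Fin n) R))) := by
  have h := Submodule.mul_mem_mul hx hy
  rw [Submodule.span_mul_span] at h
  refine Submodule.span_mono ?_ h
  rintro z ⟨u, ⟨p, hp, rfl⟩, v, ⟨q, hq, rfl⟩, rfl⟩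
  exact ⟨p * q, A.mul_mem hp hq, ltm_mul ord p q⟩

noncomputable def ltmSpanAlg (A : Subalgebra R (MvPolynomial (Fin n) R)) :
    Subalgebra R (MvPolynomial (Fin n) R) :=
  (Submodule.span R (ord.ltm '' (A : Set (MvPolynomial (Fin n) R)))).toSubalgebra
    (Submodule.subset_span
      (show (1 : MvPolynomial (Fin n) R) ∈ ord.ltm '' (A : Set (MvPolynomial (Fin n) R)) from
        ⟨1, A.one_mem, ltm_one ord⟩))
    (fun x y hx hy => ltm_mem_mul_closed ord hx hy)

theorem adjoin_ltm_eq_span (A : Subalgebra R (MvPolynomial (Fin n) R)) :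
    (Algebra.adjoin R (ord.ltm '' (A : Set (MvPolynomial (Fin n) R))) :
        Set (MvPolynomial (Fin n) R)) =
      (Submodule.span R (ord.ltm '' (A : Set (MvPolynomial (Fin n) R))) :
        Set (MvPolynomial (Fin n) R)) := by
  apply le_antisymm
  · have hle : Algebra.adjoin R (ord.ltm '' (A : Set (MvPolynomial (Fin n) R))) ≤
        ltmSpanAlg ord A :=
      Algebra.adjoin_le_iff.2 (fun z hz => Submodule.subset_span hz)
    exact fun x hx => hle hx
  · have hle : Submodule.span R (ord.ltm '' (A : Set (MvPolynomial (Fin n) R))) ≤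
        Subalgebra.toSubmodule (Algebra.adjoin R (ord.ltm '' (A : Set (MvPolynomial (Fin n) R)))) :=
      Submodule.span_le.2 Algebra.subset_adjoin
    exact fun x hx => hle hx

/-- Every element of `R[Lt A]` is a finite sum of leading terms of elements of `A`. -/
theorem exists_rep_of_mem_span {A : Subalgebra R (MvPolynomial (Fin n) R)}
    {x : MvPolynomial (Fin n) R}
    (hx : x ∈ Submodule.span R (ord.ltm '' (A : Set (MvPolynomial (Fin n) R)))) :
    ∃ (m : ℕ) (u : Fin m → MvPolynomial (Fin n) R),
      (∀ k, u k ∈ A) ∧ x = ∑ k, ord.ltm (u k) := by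
  obtain ⟨m, f, gg, hsum⟩ := Submodule.mem_span_set'.1 hx
  choose w hwA hw using fun i => (gg i).2
  refine ⟨m, fun i => C (f i) * w i, fun i => A.mul_mem (A.algebraMap_mem (f i)) (hwA i), ?_⟩
  rw [← hsum]
  refine Finset.sum_congr rfl fun i _ => ?_
  rw [← smul_ltm ord, hw]

theorem monomial_of_support_subset {p : MvPolynomial (Fin n) R} {α : Fin n →₀ ℕ}
    (h : p.support ⊆ {α}) : p = monomial α (p.coeff α) := by
  ext β
  rw [MvPolynomial.coeff_monomial]
  by_cases hβ : α = β
  · subst hβ; simp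
  · rw [if_neg hβ]
    by_contra hc
    have := h (MvPolynomial.mem_support_iff.2 hc)
    rw [Finset.mem_singleton] at this
    exact hβ this.symm

/-- Homogeneous components of elements of `R[Lt A]` are leading terms of elements of `A`. -/
theorem exists_ltm_component {A : Subalgebra R (MvPolynomial (Fin n) R)}
    {x : MvPolynomial (Fin n) R} {γ : Fin n →₀ ℕ}
    (hx : x ∈ Submodule.span R (ord.ltm '' (A : Set (MvPolynomial (Fin n) R))))
    (hc : x.coeff γ ≠ 0) :
    ∃ a : MvPolynomial (Fin n) R, a ∈ A ∧ a ≠ 0 ∧ ord.lp a = γ ∧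
      ord.ltm a = monomial γ (x.coeff γ) := by
  classical
  obtain ⟨m, u, huA, rfl⟩ := exists_rep_of_mem_span ord hx
  set T : Finset (Fin m) := Finset.univ.filter (fun k => u k ≠ 0 ∧ ord.lp (u k) = γ) with hT
  set a : MvPolynomial (Fin n) R := ∑ k ∈ T, u k with ha
  have hcoeff : (∑ k, ord.ltm (u k)).coeff γ = ∑ k ∈ T, ord.lc (u k) := by
    rw [MvPolynomial.coeff_sum]
    rw [← Finset.sum_filter_add_sum_filter_not Finset.univ
      (fun k => u k ≠ 0 ∧ ord.lp (u k) = γ)]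
    have h2 : ∀ k ∈ Finset.univ.filter (fun k => ¬(u k ≠ 0 ∧ ord.lp (u k) = γ)),
        (ord.ltm (u k)).coeff γ = 0 := by
      intro k hk
      rw [Finset.mem_filter] at hk
      rcases not_and_or.1 hk.2 with h | h
      · rw [not_not.1 h]; simp
      · rw [coeff_ltm, if_neg (fun he => h he.symm)]
    rw [Finset.sum_eq_zero h2, add_zero]
    refine Finset.sum_congr rfl fun k hk => ?_
    rw [Finset.mem_filter] at hk
    rw [coeff_ltm, if_pos hk.2.2.symm]
  have hcoeffa : a.coeff γ = (∑ k, ord.ltm (u k)).coeff γ := by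
    rw [hcoeff, ha, MvPolynomial.coeff_sum]
    refine Finset.sum_congr rfl fun k hk => ?_
    rw [Finset.mem_filter] at hk
    unfold TermOrder.lc
    rw [hk.2.2]
  have hbdd : Bdd ord γ a := by
    refine Bdd.sum ord fun k hk => ?_
    rw [Finset.mem_filter] at hk
    exact hk.2.2 ▸ bdd_lp ord (u k)
  have hane : a ≠ 0 := fun h0 => hc (by rw [← hcoeffa, h0]; simp)
  have hlpa : ord.lp a = γ := by
    refine ole_antisymm ord (hbdd.lp_le ord hane) ?_
    exact le_lp ord (MvPolynomial.mem_support_iff.2 (hcoeffa ▸ hc))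
  refine ⟨a, A.sum_mem (fun k hk => huA k), hane, hlpa, ?_⟩
  show monomial _ _ = _
  unfold TermOrder.lc
  rw [hlpa, hcoeffa]


/-! ### Representations extracted from si-reductions -/

theorem sireduce_rep {A : Subalgebra R (MvPolynomial (Fin n) R)} {M : ℕ}
    (g : Fin M → A) {h : MvPolynomial (Fin n) R}
    (hred : SiReduce ord A (Subtype.val '' Set.range g) h 0) :
    ∃ u : Fin M → MvPolynomial (Fin n) R, (∀ i, u i ∈ A) ∧
      h = ∑ i, u i * (g i : MvPolynomial (Fin n) R) ∧
      ∀ i, Bdd ord (ord.lp h) (u i * (g i : MvPolynomial (Fin n) R)) := by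
  classical
  induction hred using Relation.ReflTransGen.head_induction_on with
  | refl =>
    exact ⟨0, fun i => A.zero_mem, by simp, fun i => by simpa using bdd_zero ord _⟩
  | @head h c hstep _ ih =>
    obtain ⟨α, M₀, gs, as, hcoeff, hgsG, hasA, hprod, hmon, hc⟩ := hstep
    obtain ⟨u', hu'A, hu'sum, hu'bdd⟩ := ih
    have hσ : ∀ k, ∃ i, ((g i : MvPolynomial (Fin n) R)) = gs k := by
      intro k
      obtain ⟨x, ⟨i, rfl⟩, hx⟩ := hgsG k
      exact ⟨i, hx⟩
    choose σ hσ using hσ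
    have hhne : h ≠ 0 := fun h0 => hcoeff (by rw [h0]; simp)
    have hαle : ord.lo.le α (ord.lp h) :=
      le_lp ord (MvPolynomial.mem_support_iff.2 hcoeff)
    have hbddk : ∀ k, Bdd ord (ord.lp h) (as k * gs k) := by
      intro k
      exact bdd_of_lp_le ord (by rw [(hprod k).2]; exact hαle)
    have hbddsum : Bdd ord (ord.lp h) (∑ k, as k * gs k) :=
      Bdd.sum ord fun k _ => hbddk k
    have hlpc : ord.lo.le (ord.lp c) (ord.lp h) := by
      by_cases hc0 : c = 0
      · rw [hc0, lp_zero]; exact zero_ole ord _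
      · refine Bdd.lp_le ord hc0 ?_
        rw [hc]
        exact (bdd_lp ord h).sub ord hbddsum
    refine ⟨fun i => u' i + ∑ k ∈ Finset.univ.filter (fun k => σ k = i), as k,
      fun i => A.add_mem (hu'A i) (A.sum_mem fun k _ => hasA k), ?_, ?_⟩
    · have hfib : ∑ i, (∑ k ∈ Finset.univ.filter (fun k => σ k = i), as k) *
          (g i : MvPolynomial (Fin n) R) = ∑ k, as k * gs k := by
        rw [← Finset.sum_fiberwise Finset.univ σ (fun k => as k * gs k)]
        refine Finset.sum_congr rfl fun i _ => ?_
        rw [Finset.sum_mul]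
        refine Finset.sum_congr rfl fun k hk => ?_
        rw [Finset.mem_filter] at hk
        rw [← hk.2, hσ k]
      have : h = c + ∑ k, as k * gs k := by rw [hc]; ring
      rw [this, hu'sum]
      rw [← hfib]
      rw [← Finset.sum_add_distrib]
      refine Finset.sum_congr rfl fun i _ => ?_
      ring
    · intro i
      rw [add_mul]
      refine Bdd.add ord ((hu'bdd i).mono ord hlpc) ?_
      rw [Finset.sum_mul]
      refine Bdd.sum ord fun k hk => ?_
      rw [Finset.mem_filter] at hk
      rw [← hk.2, hσ k]
      exact hbddk k


/-! ### Representations from membership in the leading term ideal -/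

theorem mem_ltAlg_iff_span {A : Subalgebra R (MvPolynomial (Fin n) R)}
    {x : MvPolynomial (Fin n) R} :
    x ∈ LtAlg ord A ↔
      x ∈ Submodule.span R (ord.ltm '' (A : Set (MvPolynomial (Fin n) R))) := by
  have h := adjoin_ltm_eq_span ord A
  constructor
  · intro hx
    have hx' : x ∈ (Algebra.adjoin R (ord.ltm '' (A : Set (MvPolynomial (Fin n) R))) :
        Set (MvPolynomial (Fin n) R)) := hx
    rw [h] at hx'
    exact hx'
  · intro hx
    have hx' : x ∈ (Submodule.span R (ord.ltm '' (A : Set (MvPolynomial (Fin n) R))) :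
        Set (MvPolynomial (Fin n) R)) := hx
    rw [← h] at hx'
    exact hx'

theorem exists_rep_of_mem_idealSpanLtG {A : Subalgebra R (MvPolynomial (Fin n) R)} {M : ℕ}
    (g : Fin M → A) {x : LtAlg ord A}
    (hx : x ∈ Ideal.span
      ((Subtype.val ⁻¹' (ord.ltm '' (Subtype.val '' (Set.range g))) : Set (LtAlg ord A)))) :
    ∃ (m : ℕ) (u : Fin m → MvPolynomial (Fin n) R) (ι : Fin m → Fin M),
      (∀ k, u k ∈ A) ∧
        (x : MvPolynomial (Fin n) R) = ∑ k, ord.ltm (u k) * ord.ltm ((g (ι k) :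
          MvPolynomial (Fin n) R)) := by
  classical
  obtain ⟨m, f, t, hsum⟩ := Submodule.mem_span_set'.1 hx
  have hidx : ∀ i : Fin m, ∃ j : Fin M,
      ord.ltm ((g j : MvPolynomial (Fin n) R)) = ((t i : LtAlg ord A) :
        MvPolynomial (Fin n) R) := by
    intro i
    obtain ⟨y, ⟨w, ⟨j, rfl⟩, rfl⟩, hy⟩ := (t i).2
    exact ⟨j, hy⟩
  choose jdx hjdx using hidx
  have hv : (x : MvPolynomial (Fin n) R) =
      ∑ i, ((f i : LtAlg ord A) : MvPolynomial (Fin n) R) *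
        ord.ltm ((g (jdx i) : MvPolynomial (Fin n) R)) := by
    have := congrArg (Subtype.val) hsum
    rw [← this]
    push_cast
    refine Finset.sum_congr rfl fun i _ => ?_
    rw [smul_eq_mul]
    push_cast
    rw [hjdx i]
  have hfspan : ∀ i : Fin m, ((f i : LtAlg ord A) : MvPolynomial (Fin n) R) ∈
      Submodule.span R (ord.ltm '' (A : Set (MvPolynomial (Fin n) R))) :=
    fun i => (mem_ltAlg_iff_span ord).1 (f i).2
  choose mi ws hwsA hws using fun i => exists_rep_of_mem_span ord (hfspan i)
  have hv2 : (x : MvPolynomial (Fin n) R) =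
      ∑ p : (Σ i : Fin m, Fin (mi i)), ord.ltm (ws p.1 p.2) *
        ord.ltm ((g (jdx p.1) : MvPolynomial (Fin n) R)) := by
    rw [hv, ← Finset.univ_sigma_univ, Finset.sum_sigma]
    refine Finset.sum_congr rfl fun i _ => ?_
    rw [hws i, Finset.sum_mul]
  set κ := (Σ i : Fin m, Fin (mi i))
  let e : κ ≃ Fin (Fintype.card κ) := Fintype.equivFin κ
  refine ⟨Fintype.card κ, fun k => ws (e.symm k).1 (e.symm k).2,
    fun k => jdx (e.symm k).1, fun k => hwsA _ _, ?_⟩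
  rw [hv2]
  exact (Equiv.sum_comp e.symm (fun p : κ => ord.ltm (ws p.1 p.2) *
    ord.ltm ((g (jdx p.1) : MvPolynomial (Fin n) R)))).symm


/-! ### Building si-reduction steps -/

theorem siStep_of_finset {A : Subalgebra R (MvPolynomial (Fin n) R)} {M : ℕ}
    (g : Fin M → A) {m : ℕ} (T : Finset (Fin m))
    (u : Fin m → MvPolynomial (Fin n) R) (ι : Fin m → Fin M)
    (h : MvPolynomial (Fin n) R) (α : Fin n →₀ ℕ)
    (hcoeff : h.coeff α ≠ 0)
    (huA : ∀ k, u k ∈ A)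
    (hne : ∀ k ∈ T, u k * (g (ι k) : MvPolynomial (Fin n) R) ≠ 0)
    (hlp : ∀ k ∈ T, ord.lp (u k * (g (ι k) : MvPolynomial (Fin n) R)) = α)
    (hmon : (monomial α (h.coeff α) : MvPolynomial (Fin n) R) =
      ∑ k ∈ T, ord.ltm (u k * (g (ι k) : MvPolynomial (Fin n) R))) :
    SiStep ord A (Subtype.val '' Set.range g) h
      (h - ∑ k ∈ T, u k * (g (ι k) : MvPolynomial (Fin n) R)) := by
  classical
  let e : T ≃ Fin T.card := T.equivFin
  have hconv : ∀ F : Fin m → MvPolynomial (Fin n) R,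
      ∑ j : Fin T.card, F ((e.symm j : T) : Fin m) = ∑ k ∈ T, F k := by
    intro F
    rw [Equiv.sum_comp e.symm (fun x : T => F (x : Fin m))]
    exact Finset.sum_coe_sort T F
  refine ⟨α, T.card, fun j => (g (ι ((e.symm j : T) : Fin m)) : MvPolynomial (Fin n) R),
    fun j => u ((e.symm j : T) : Fin m), hcoeff, ?_, ?_, ?_, ?_, ?_⟩
  · intro j
    exact ⟨g (ι ((e.symm j : T) : Fin m)), ⟨_, rfl⟩, rfl⟩
  · intro j
    exact huA _
  · intro j
    exact ⟨hne _ (e.symm j).2, hlp _ (e.symm j).2⟩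
  · rw [hmon]
    exact (hconv (fun k => ord.ltm (u k * (g (ι k) : MvPolynomial (Fin n) R)))).symm
  · rw [hconv (fun k => u k * (g (ι k) : MvPolynomial (Fin n) R))]

/-! ### SG-basis implies si-reduction to zero -/

theorem sgb_sireduce {A : Subalgebra R (MvPolynomial (Fin n) R)} {M : ℕ}
    (g : Fin M → A) (hg : ∀ i, (g i : MvPolynomial (Fin n) R) ≠ 0)
    (hSG : IsSGBasis ord A (Ideal.span (Set.range g)) (Set.range g)) :
    ∀ hh : A, hh ∈ Ideal.span (Set.range g) →
      SiReduce ord A (Subtype.val '' Set.range g) (hh : MvPolynomial (Fin n) R) 0 := by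
  classical
  suffices main : ∀ δ : Fin n →₀ ℕ, ∀ hh : A, hh ∈ Ideal.span (Set.range g) →
      ord.lp (hh : MvPolynomial (Fin n) R) = δ →
      SiReduce ord A (Subtype.val '' Set.range g) (hh : MvPolynomial (Fin n) R) 0 by
    intro hh hmem
    exact main _ hh hmem rfl
  intro δ
  refine ord.wf.induction (C := fun δ => ∀ hh : A, hh ∈ Ideal.span (Set.range g) →
      ord.lp (hh : MvPolynomial (Fin n) R) = δ →
      SiReduce ord A (Subtype.val '' Set.range g) (hh : MvPolynomial (Fin n) R) 0) δ ?_
  intro δ IH hh hmem hlpδ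
  by_cases h0 : (hh : MvPolynomial (Fin n) R) = 0
  · rw [h0]
    exact Relation.ReflTransGen.refl
  set h : MvPolynomial (Fin n) R := (hh : MvPolynomial (Fin n) R) with hh_def
  have hxI : ltA ord A hh ∈ Ideal.span
      ((Subtype.val ⁻¹' (ord.ltm '' (Subtype.val ''
        ((Ideal.span (Set.range g) : Ideal A) : Set A))) : Set (LtAlg ord A))) :=
    Ideal.subset_span ⟨h, ⟨hh, hmem, rfl⟩, rfl⟩
  rw [← hSG] at hxI
  obtain ⟨m, u, ι, huA, hrep⟩ := exists_rep_of_mem_idealSpanLtG ord g hxI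
  have hrep' : ord.ltm h = ∑ k, ord.ltm (u k) *
      ord.ltm ((g (ι k) : MvPolynomial (Fin n) R)) := hrep
  set T : Finset (Fin m) := Finset.univ.filter
    (fun k => u k ≠ 0 ∧ ord.lp (u k * (g (ι k) : MvPolynomial (Fin n) R)) = ord.lp h) with hT
  have hcoeffterm : ∀ k : Fin m,
      (ord.ltm (u k) * ord.ltm ((g (ι k) : MvPolynomial (Fin n) R))).coeff (ord.lp h) =
        if k ∈ T then ord.lc (u k * (g (ι k) : MvPolynomial (Fin n) R)) else 0 := by
    intro k
    by_cases hk0 : u k = 0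
    · rw [hk0]
      simp [hT, hk0]
    · rw [← ltm_mul ord, coeff_ltm]
      by_cases hkT : k ∈ T
      · rw [if_pos hkT]
        rw [hT, Finset.mem_filter] at hkT
        rw [if_pos hkT.2.2.symm]
      · rw [if_neg hkT]
        have : ¬ ord.lp (u k * (g (ι k) : MvPolynomial (Fin n) R)) = ord.lp h := by
          intro he
          exact hkT (by rw [hT, Finset.mem_filter]; exact ⟨Finset.mem_univ k, hk0, he⟩)
        rw [if_neg (fun he => this he.symm)]
  have hc1 : h.coeff (ord.lp h) =
      ∑ k ∈ T, ord.lc (u k * (g (ι k) : MvPolynomial (Fin n) R)) := by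
    have hcc := congrArg (MvPolynomial.coeff (ord.lp h)) hrep'
    rw [coeff_ltm_lp, MvPolynomial.coeff_sum] at hcc
    calc h.coeff (ord.lp h) = ord.lc h := rfl
      _ = _ := hcc
      _ = _ := by
          rw [Finset.sum_congr rfl (fun k _ => hcoeffterm k), Finset.sum_ite_mem,
            Finset.univ_inter]
  have hmon : (monomial (ord.lp h) (h.coeff (ord.lp h)) : MvPolynomial (Fin n) R) =
      ∑ k ∈ T, ord.ltm (u k * (g (ι k) : MvPolynomial (Fin n) R)) := by
    rw [hc1, map_sum]
    refine Finset.sum_congr rfl fun k hk => ?_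
    rw [hT, Finset.mem_filter] at hk
    show _ = monomial _ _
    rw [hk.2.2]
  have hneT : ∀ k ∈ T, u k * (g (ι k) : MvPolynomial (Fin n) R) ≠ 0 := by
    intro k hk
    rw [hT, Finset.mem_filter] at hk
    exact mul_ne_zero hk.2.1 (hg (ι k))
  have hlpT : ∀ k ∈ T, ord.lp (u k * (g (ι k) : MvPolynomial (Fin n) R)) = ord.lp h := by
    intro k hk
    rw [hT, Finset.mem_filter] at hk
    exact hk.2.2
  have hcoeffne : h.coeff (ord.lp h) ≠ 0 := lc_ne_zero ord h0
  have hstep := siStep_of_finset ord g T u ι h (ord.lp h) hcoeffne huA hneT hlpT hmon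
  set S : MvPolynomial (Fin n) R := ∑ k ∈ T, u k * (g (ι k) : MvPolynomial (Fin n) R)
    with hS
  set hh' : A := hh - ∑ k ∈ T, (⟨u k, huA k⟩ : A) * g (ι k) with hh'_def
  have hmem' : hh' ∈ Ideal.span (Set.range g) := by
    refine Ideal.sub_mem _ hmem (Ideal.sum_mem _ fun k hk => ?_)
    exact Ideal.mul_mem_left _ _ (Ideal.subset_span ⟨ι k, rfl⟩)
  have hval : (hh' : MvPolynomial (Fin n) R) = h - S := by
    rw [hh'_def, hS]
    push_cast
    rfl
  by_cases h'0 : h - S = 0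
  · rw [h'0] at hstep
    exact Relation.ReflTransGen.single hstep
  · have hbddS : Bdd ord (ord.lp h) S :=
      Bdd.sum ord fun k hk => bdd_of_lp_le ord (by rw [hlpT k hk]; exact ole_refl ord _)
    have hbdd' : Bdd ord (ord.lp h) (h - S) := (bdd_lp ord h).sub ord hbddS
    have hScoeff : S.coeff (ord.lp h) =
        ∑ k ∈ T, ord.lc (u k * (g (ι k) : MvPolynomial (Fin n) R)) := by
      rw [hS, MvPolynomial.coeff_sum]
      refine Finset.sum_congr rfl fun k hk => ?_
      unfold TermOrder.lc
      rw [hlpT k hk]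
    have hcoeff' : (h - S).coeff (ord.lp h) = 0 := by
      rw [MvPolynomial.coeff_sub, hScoeff, hc1, sub_self]
    have hlplt : ord.lo.lt (ord.lp (h - S)) δ := by
      rw [← hlpδ]
      refine olt_of_ole_of_ne ord (hbdd'.lp_le ord h'0) ?_
      intro he
      exact lc_ne_zero ord h'0 (by rw [TermOrder.lc, he]; exact hcoeff')
    have hrec := IH (ord.lp (h - S)) hlplt hh' hmem' (by rw [hval])
    rw [hval] at hrec
    exact Relation.ReflTransGen.head hstep hrec


/-! ### The descent: si-reductions to zero imply SG-basis -/

theorem rep_descent {A : Subalgebra R (MvPolynomial (Fin n) R)} {M N : ℕ}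
    (g : Fin M → A) (hg : ∀ i, (g i : MvPolynomial (Fin n) R) ≠ 0)
    (Q : Fin N → Fin M → A)
    (hQsyz : ∀ j, ∑ i, ord.ltm ((Q j i : MvPolynomial (Fin n) R)) *
      ord.ltm ((g i : MvPolynomial (Fin n) R)) = 0)
    (hQhom : ∀ j, ∃ α : Fin n →₀ ℕ, ∀ i,
      (ord.ltm ((Q j i : MvPolynomial (Fin n) R)) *
        ord.ltm ((g i : MvPolynomial (Fin n) R))).support ⊆ {α})
    (hQgen : ∀ b : Fin M → LtAlg ord A,
      (∑ i, (b i : MvPolynomial (Fin n) R) * ord.ltm ((g i : MvPolynomial (Fin n) R))) = 0 →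
      b ∈ Submodule.span (LtAlg ord A) (Set.range fun j => fun i => ltA ord A (Q j i)))
    (hred : ∀ j, SiReduce ord A (Subtype.val '' Set.range g)
        (∑ i, ((Q j i : MvPolynomial (Fin n) R)) * ((g i : MvPolynomial (Fin n) R))) 0) :
    ∀ h : MvPolynomial (Fin n) R, h ∈ A → h ≠ 0 →
      (∃ a : Fin M → MvPolynomial (Fin n) R, (∀ i, a i ∈ A) ∧
        h = ∑ i, a i * (g i : MvPolynomial (Fin n) R)) →
      ∀ x : LtAlg ord A, (x : MvPolynomial (Fin n) R) = ord.ltm h →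
      x ∈ Ideal.span
        ((Subtype.val ⁻¹' (ord.ltm '' (Subtype.val '' (Set.range g))) : Set (LtAlg ord A))) := by
  classical
  set hpoly : Fin N → MvPolynomial (Fin n) R :=
    fun j => ∑ i, ((Q j i : MvPolynomial (Fin n) R)) * ((g i : MvPolynomial (Fin n) R))
    with hpoly_def
  choose α hα using hQhom
  have memLt : ∀ p, p ∈ A → ord.ltm p ∈ LtAlg ord A :=
    fun p hp => Algebra.subset_adjoin ⟨p, hp, rfl⟩
  have hF1 : ∀ j i, (Q j i : MvPolynomial (Fin n) R) ≠ 0 →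
      ord.lp ((Q j i : MvPolynomial (Fin n) R)) + ord.lp ((g i : MvPolynomial (Fin n) R)) =
        α j := by
    intro j i hQne
    have hmul : (Q j i : MvPolynomial (Fin n) R) * (g i : MvPolynomial (Fin n) R) ≠ 0 :=
      mul_ne_zero hQne (hg i)
    have hmem : ord.lp ((Q j i : MvPolynomial (Fin n) R)) +
        ord.lp ((g i : MvPolynomial (Fin n) R)) ∈ ({α j} : Finset (Fin n →₀ ℕ)) := by
      apply hα j i
      rw [← ltm_mul ord, MvPolynomial.mem_support_iff, ← lp_mul ord hQne (hg i), coeff_ltm_lp]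
      exact lc_ne_zero ord hmul
    simpa using hmem
  have hQgbdd : ∀ j i, Bdd ord (α j)
      ((Q j i : MvPolynomial (Fin n) R) * (g i : MvPolynomial (Fin n) R)) := by
    intro j i
    by_cases hQ0 : (Q j i : MvPolynomial (Fin n) R) = 0
    · rw [hQ0, zero_mul]; exact bdd_zero ord _
    · exact bdd_of_lp_le ord
        (by rw [lp_mul ord hQ0 (hg i), hF1 j i hQ0]; exact ole_refl ord _)
  have hlpQg : ∀ j i, (Q j i : MvPolynomial (Fin n) R) ≠ 0 →
      ord.lp ((Q j i : MvPolynomial (Fin n) R) * (g i : MvPolynomial (Fin n) R)) = α j := by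
    intro j i hQ0
    rw [lp_mul ord hQ0 (hg i)]
    exact hF1 j i hQ0
  have hcoeffQg : ∀ j i, ((Q j i : MvPolynomial (Fin n) R) *
      (g i : MvPolynomial (Fin n) R)).coeff (α j) =
      (ord.ltm ((Q j i : MvPolynomial (Fin n) R)) *
        ord.ltm ((g i : MvPolynomial (Fin n) R))).coeff (α j) := by
    intro j i
    by_cases hQ0 : (Q j i : MvPolynomial (Fin n) R) = 0
    · rw [hQ0]; simp
    · rw [← ltm_mul ord, coeff_ltm, if_pos (hlpQg j i hQ0).symm]
      unfold TermOrder.lc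
      rw [hlpQg j i hQ0]
  have hF3 : ∀ j, (hpoly j).coeff (α j) = 0 := by
    intro j
    rw [hpoly_def]
    rw [MvPolynomial.coeff_sum, Finset.sum_congr rfl (fun i _ => hcoeffQg j i),
      ← MvPolynomial.coeff_sum, hQsyz j, MvPolynomial.coeff_zero]
  have hF2 : ∀ j, Bdd ord (α j) (hpoly j) := fun j => Bdd.sum ord fun i _ => hQgbdd j i
  have hF4 : ∀ j, hpoly j ≠ 0 → ord.lo.lt (ord.lp (hpoly j)) (α j) := by
    intro j hne
    refine olt_of_ole_of_ne ord ((hF2 j).lp_le ord hne) fun he => ?_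
    refine lc_ne_zero ord hne ?_
    unfold TermOrder.lc
    rw [he]
    exact hF3 j
  choose u huA husum hubdd using fun j => sireduce_rep ord g (hred j)
  set U : Fin N → Fin M → MvPolynomial (Fin n) R :=
    fun j => if hpoly j = 0 then 0 else u j with hU_def
  have hUA : ∀ j i, U j i ∈ A := by
    intro j i
    simp only [hU_def]
    by_cases h0 : hpoly j = 0
    · rw [if_pos h0]; exact A.zero_mem
    · rw [if_neg h0]; exact huA j i
  have hUsum : ∀ j, hpoly j = ∑ i, U j i * (g i : MvPolynomial (Fin n) R) := by
    intro j
    simp only [hU_def]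
    by_cases h0 : hpoly j = 0
    · rw [if_pos h0, h0]; simp
    · rw [if_neg h0]; exact husum j
  have hU0 : ∀ j, hpoly j = 0 → U j = 0 := by
    intro j h0
    simp only [hU_def]
    rw [if_pos h0]
  have hUbdd : ∀ j i, Bdd ord (ord.lp (hpoly j)) (U j i * (g i : MvPolynomial (Fin n) R)) := by
    intro j i
    by_cases h0 : hpoly j = 0
    · rw [hU0 j h0]; simpa using bdd_zero ord _
    · simp only [hU_def]
      rw [if_neg h0]
      exact hubdd j i
  -- helper to pick the maximal degree of a representation
  have pickδ : ∀ a : Fin M → MvPolynomial (Fin n) R,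
      (∃ i, a i * (g i : MvPolynomial (Fin n) R) ≠ 0) →
      ∃ δ', (∀ i, Bdd ord δ' (a i * (g i : MvPolynomial (Fin n) R))) ∧
        ∃ i0, a i0 * (g i0 : MvPolynomial (Fin n) R) ≠ 0 ∧
          ord.lp (a i0 * (g i0 : MvPolynomial (Fin n) R)) = δ' := by
    intro a hne
    letI := ord.lo
    set T : Finset (Fin M) :=
      Finset.univ.filter (fun i => a i * (g i : MvPolynomial (Fin n) R) ≠ 0) with hT
    have hTne : T.Nonempty :=
      ⟨hne.choose, Finset.mem_filter.2 ⟨Finset.mem_univ _, hne.choose_spec⟩⟩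
    set img := T.image (fun i => ord.lp (a i * (g i : MvPolynomial (Fin n) R))) with himg
    have himgne : img.Nonempty := hTne.image _
    refine ⟨img.max' himgne, ?_, ?_⟩
    · intro i
      by_cases h0 : a i * (g i : MvPolynomial (Fin n) R) = 0
      · rw [h0]; exact bdd_zero ord _
      · have hmemT : i ∈ T := Finset.mem_filter.2 ⟨Finset.mem_univ _, h0⟩
        have hmem : ord.lp (a i * (g i : MvPolynomial (Fin n) R)) ∈ img :=
          Finset.mem_image_of_mem _ hmemT
        exact bdd_of_lp_le ord (Finset.le_max' img _ hmem)
    · obtain ⟨i0, hi0T, hi0⟩ := Finset.mem_image.1 (Finset.max'_mem img himgne)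
      exact ⟨i0, (Finset.mem_filter.1 hi0T).2, hi0⟩
  suffices main : ∀ δ : Fin n →₀ ℕ, ∀ h : MvPolynomial (Fin n) R, h ∈ A → h ≠ 0 →
      ∀ a : Fin M → MvPolynomial (Fin n) R, (∀ i, a i ∈ A) →
      h = ∑ i, a i * (g i : MvPolynomial (Fin n) R) →
      (∀ i, Bdd ord δ (a i * (g i : MvPolynomial (Fin n) R))) →
      ∀ x : LtAlg ord A, (x : MvPolynomial (Fin n) R) = ord.ltm h →
      x ∈ Ideal.span
        ((Subtype.val ⁻¹' (ord.ltm '' (Subtype.val '' (Set.range g))) : Set (LtAlg ord A))) by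
    rintro h hA hne ⟨a, haA, hsum⟩ x hx
    have hex : ∃ i, a i * (g i : MvPolynomial (Fin n) R) ≠ 0 := by
      by_contra hall
      push_neg at hall
      exact hne (by rw [hsum]; exact Finset.sum_eq_zero fun i _ => hall i)
    obtain ⟨δ₀, hδ₀, -⟩ := pickδ a hex
    exact main δ₀ h hA hne a haA hsum hδ₀ x hx
  intro δ
  refine ord.wf.induction (C := fun δ => ∀ h : MvPolynomial (Fin n) R, h ∈ A → h ≠ 0 →
      ∀ a : Fin M → MvPolynomial (Fin n) R, (∀ i, a i ∈ A) →
      h = ∑ i, a i * (g i : MvPolynomial (Fin n) R) →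
      (∀ i, Bdd ord δ (a i * (g i : MvPolynomial (Fin n) R))) →
      ∀ x : LtAlg ord A, (x : MvPolynomial (Fin n) R) = ord.ltm h →
      x ∈ Ideal.span
        ((Subtype.val ⁻¹' (ord.ltm '' (Subtype.val '' (Set.range g))) : Set (LtAlg ord A))))
    δ ?_
  clear δ
  intro δ IH h hA hne a haA hsum hbdd x hx
  set S : Finset (Fin M) := Finset.univ.filter
    (fun i => a i * (g i : MvPolynomial (Fin n) R) ≠ 0 ∧
      ord.lp (a i * (g i : MvPolynomial (Fin n) R)) = δ) with hS_def
  have hzero : ∀ i ∉ S, (a i * (g i : MvPolynomial (Fin n) R)).coeff δ = 0 := by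
    intro i hi
    by_cases h0 : a i * (g i : MvPolynomial (Fin n) R) = 0
    · rw [h0]; simp
    · have hlpne : ord.lp (a i * (g i : MvPolynomial (Fin n) R)) ≠ δ := by
        intro he
        exact hi (Finset.mem_filter.2 ⟨Finset.mem_univ _, h0, he⟩)
      by_contra hc
      exact hlpne (ole_antisymm ord ((hbdd i).lp_le ord h0)
        (le_lp ord (MvPolynomial.mem_support_iff.2 hc)))
  have hcoeffδ : h.coeff δ = ∑ i ∈ S, (a i * (g i : MvPolynomial (Fin n) R)).coeff δ := by
    rw [hsum, MvPolynomial.coeff_sum]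
    exact (Finset.sum_subset (Finset.subset_univ S) (fun i _ hi => hzero i hi)).symm
  have hS_lc : ∀ i ∈ S, (a i * (g i : MvPolynomial (Fin n) R)).coeff δ =
      ord.lc (a i * (g i : MvPolynomial (Fin n) R)) := by
    intro i hi
    rw [hS_def, Finset.mem_filter] at hi
    unfold TermOrder.lc
    rw [hi.2.2]
  have hS_eq : ∀ i ∈ S, ord.ltm (a i) * ord.ltm ((g i : MvPolynomial (Fin n) R)) =
      monomial δ ((a i * (g i : MvPolynomial (Fin n) R)).coeff δ) := by
    intro i hi
    have hi' := hi
    rw [hS_def, Finset.mem_filter] at hi'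
    rw [← ltm_mul ord]
    show monomial _ _ = _
    rw [hi'.2.2, hS_lc i hi]
  have hsum_S : ∑ i ∈ S, ord.ltm (a i) * ord.ltm ((g i : MvPolynomial (Fin n) R)) =
      monomial δ (h.coeff δ) := by
    rw [Finset.sum_congr rfl hS_eq, ← map_sum, hcoeffδ]
  by_cases hcne : h.coeff δ = 0
  · -- descent case
    set b : Fin M → LtAlg ord A := fun i =>
      if i ∈ S then (⟨ord.ltm (a i), memLt _ (haA i)⟩ : LtAlg ord A) else 0 with hb_def
    have hbval : ∀ i, ((b i : LtAlg ord A) : MvPolynomial (Fin n) R) =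
        if i ∈ S then ord.ltm (a i) else 0 := by
      intro i
      simp only [hb_def]
      by_cases hi : i ∈ S
      · rw [if_pos hi, if_pos hi]
      · rw [if_neg hi, if_neg hi]; rfl
    have hbsyz : (∑ i, ((b i : LtAlg ord A) : MvPolynomial (Fin n) R) *
        ord.ltm ((g i : MvPolynomial (Fin n) R))) = 0 := by
      rw [Finset.sum_congr rfl (fun i _ => by rw [hbval i, ite_mul, zero_mul]),
        Finset.sum_ite_mem, Finset.univ_inter, hsum_S, hcne, map_zero]
    obtain ⟨c, hc⟩ := (Submodule.mem_span_range_iff_exists_fun (LtAlg ord A)).1 (hQgen b hbsyz)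
    have hpoint : ∀ i, ∑ j, ((c j : LtAlg ord A) : MvPolynomial (Fin n) R) *
        ord.ltm ((Q j i : MvPolynomial (Fin n) R)) =
        ((b i : LtAlg ord A) : MvPolynomial (Fin n) R) := by
      intro i
      have h1 := congrFun hc i
      simp only [Finset.sum_apply, Pi.smul_apply, smul_eq_mul] at h1
      have h2 := congrArg (Subtype.val) h1
      push_cast at h2
      exact h2
    have hej : ∀ j, ∃ e : MvPolynomial (Fin n) R, e ∈ A ∧
        ord.ltm e = (if α j ≤ δ then
          monomial (δ - α j) (((c j : LtAlg ord A) : MvPolynomial (Fin n) R).coeff (δ - α j))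
          else 0) ∧
        (e ≠ 0 → α j ≤ δ ∧ ord.lp e = δ - α j) := by
      intro j
      by_cases h1 : α j ≤ δ
      · by_cases h2 : ((c j : LtAlg ord A) : MvPolynomial (Fin n) R).coeff (δ - α j) = 0
        · exact ⟨0, A.zero_mem, by rw [if_pos h1, h2, ltm_zero, map_zero],
            fun hne0 => absurd rfl hne0⟩
        · obtain ⟨e, heA, hene, hlpe, hltme⟩ :=
            exists_ltm_component ord ((mem_ltAlg_iff_span ord).1 (c j).2) h2
          exact ⟨e, heA, by rw [if_pos h1, hltme], fun _ => ⟨h1, hlpe⟩⟩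
      · exact ⟨0, A.zero_mem, by rw [if_neg h1, ltm_zero], fun hne0 => absurd rfl hne0⟩
    choose e heA hltme he0 using hej
    have hCLAIM1 : ∀ j i, (e j * ((Q j i : MvPolynomial (Fin n) R) *
        (g i : MvPolynomial (Fin n) R))).coeff δ =
        (((c j : LtAlg ord A) : MvPolynomial (Fin n) R) *
          (ord.ltm ((Q j i : MvPolynomial (Fin n) R)) *
            ord.ltm ((g i : MvPolynomial (Fin n) R)))).coeff δ := by
      intro j i
      have htmono := monomial_of_support_subset (hα j i)
      rw [htmono, MvPolynomial.coeff_mul_monomial']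
      by_cases hQ0 : (Q j i : MvPolynomial (Fin n) R) = 0
      · have : (ord.ltm ((Q j i : MvPolynomial (Fin n) R)) *
            ord.ltm ((g i : MvPolynomial (Fin n) R))).coeff (α j) = 0 := by
          rw [hQ0, ltm_zero, zero_mul, MvPolynomial.coeff_zero]
        rw [this, mul_zero, ite_self, hQ0, zero_mul, mul_zero, MvPolynomial.coeff_zero]
      · have hd : (ord.ltm ((Q j i : MvPolynomial (Fin n) R)) *
            ord.ltm ((g i : MvPolynomial (Fin n) R))).coeff (α j) =
            ord.lc ((Q j i : MvPolynomial (Fin n) R) * (g i : MvPolynomial (Fin n) R)) := by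
          rw [← ltm_mul ord, coeff_ltm, if_pos (hlpQg j i hQ0).symm]
        by_cases he : e j = 0
        · rw [he, zero_mul, MvPolynomial.coeff_zero]
          by_cases h1 : α j ≤ δ
          · rw [if_pos h1]
            have h2 : ((c j : LtAlg ord A) : MvPolynomial (Fin n) R).coeff (δ - α j) = 0 := by
              have := hltme j
              rw [he, ltm_zero, if_pos h1] at this
              by_contra hcc
              exact hcc (by
                have h3 := congrArg (MvPolynomial.coeff (δ - α j)) this
                rw [MvPolynomial.coeff_zero, MvPolynomial.coeff_monomial, if_pos rfl] at h3
                exact h3.symm)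
            rw [h2, zero_mul]
          · rw [if_neg h1]
        · obtain ⟨h1, hlpe⟩ := he0 j he
          rw [if_pos h1]
          have hQgne : (Q j i : MvPolynomial (Fin n) R) * (g i : MvPolynomial (Fin n) R) ≠ 0 :=
            mul_ne_zero hQ0 (hg i)
          have hlpfull : ord.lp (e j * ((Q j i : MvPolynomial (Fin n) R) *
              (g i : MvPolynomial (Fin n) R))) = δ := by
            rw [lp_mul ord he hQgne, hlpe, hlpQg j i hQ0, tsub_add_cancel_of_le h1]
          have hlce : ord.lc (e j) =
              ((c j : LtAlg ord A) : MvPolynomial (Fin n) R).coeff (δ - α j) := by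
            have := hltme j
            rw [if_pos h1] at this
            have h3 := congrArg (MvPolynomial.coeff (δ - α j)) this
            rw [coeff_ltm, if_pos hlpe.symm, MvPolynomial.coeff_monomial, if_pos rfl] at h3
            exact h3
          calc (e j * ((Q j i : MvPolynomial (Fin n) R) *
              (g i : MvPolynomial (Fin n) R))).coeff δ
              = ord.lc (e j * ((Q j i : MvPolynomial (Fin n) R) *
                (g i : MvPolynomial (Fin n) R))) := by
                unfold TermOrder.lc
                rw [hlpfull]
            _ = ord.lc (e j) * ord.lc ((Q j i : MvPolynomial (Fin n) R) *
                (g i : MvPolynomial (Fin n) R)) := lc_mul ord _ _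
            _ = _ := by rw [hlce, hd]
    have hCLAIM2 : ∀ i, (((b i : LtAlg ord A) : MvPolynomial (Fin n) R) *
        ord.ltm ((g i : MvPolynomial (Fin n) R))).coeff δ =
        (a i * (g i : MvPolynomial (Fin n) R)).coeff δ := by
      intro i
      rw [hbval i]
      by_cases hi : i ∈ S
      · rw [if_pos hi, hS_eq i hi, MvPolynomial.coeff_monomial, if_pos rfl]
      · rw [if_neg hi, zero_mul, MvPolynomial.coeff_zero, hzero i hi]
    have hKEY : ∀ i, (a i * (g i : MvPolynomial (Fin n) R)).coeff δ =
        ∑ j, (e j * ((Q j i : MvPolynomial (Fin n) R) *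
          (g i : MvPolynomial (Fin n) R))).coeff δ := by
      intro i
      rw [Finset.sum_congr rfl (fun j _ => hCLAIM1 j i)]
      rw [Finset.sum_congr rfl (fun j _ => by
        rw [← mul_assoc] :
        ∀ j ∈ Finset.univ, (((c j : LtAlg ord A) : MvPolynomial (Fin n) R) *
          (ord.ltm ((Q j i : MvPolynomial (Fin n) R)) *
            ord.ltm ((g i : MvPolynomial (Fin n) R)))).coeff δ =
          ((((c j : LtAlg ord A) : MvPolynomial (Fin n) R) *
            ord.ltm ((Q j i : MvPolynomial (Fin n) R))) *
              ord.ltm ((g i : MvPolynomial (Fin n) R))).coeff δ)]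
      rw [← MvPolynomial.coeff_sum, ← Finset.sum_mul, hpoint i, hCLAIM2 i]
    -- bounds for the new representation
    have hbddEQ : ∀ j i β, ord.lo.lt δ β →
        (e j * ((Q j i : MvPolynomial (Fin n) R) *
          (g i : MvPolynomial (Fin n) R))).coeff β = 0 := by
      intro j i β hβ
      by_cases he : e j = 0
      · rw [he, zero_mul]; simp
      · obtain ⟨h1, hlpe⟩ := he0 j he
        have hB : Bdd ord δ (e j * ((Q j i : MvPolynomial (Fin n) R) *
            (g i : MvPolynomial (Fin n) R))) := by
          have := (bdd_lp ord (e j)).mul ord (hQgbdd j i)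
          rw [hlpe, tsub_add_cancel_of_le h1] at this
          exact this
        exact hB.coeff_eq_zero ord hβ
    have hEU0 : ∀ j i β, ord.lo.le δ β →
        (e j * (U j i * (g i : MvPolynomial (Fin n) R))).coeff β = 0 := by
      intro j i β hβ
      by_cases he : e j = 0
      · rw [he, zero_mul]; simp
      · by_cases h0 : hpoly j = 0
        · rw [hU0 j h0]; simp
        · obtain ⟨h1, hlpe⟩ := he0 j he
          have hB : Bdd ord (ord.lp (e j) + ord.lp (hpoly j))
              (e j * (U j i * (g i : MvPolynomial (Fin n) R))) :=
            (bdd_lp ord (e j)).mul ord (hUbdd j i)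
          refine hB.coeff_eq_zero ord ?_
          have hlt : ord.lo.lt (ord.lp (e j) + ord.lp (hpoly j)) δ := by
            have h2 := olt_add_left ord (ord.lp (e j)) (hF4 j h0)
            have h3 : ord.lp (e j) + α j = δ := by
              rw [hlpe, tsub_add_cancel_of_le h1]
            rw [h3] at h2
            exact h2
          exact olt_of_olt_of_ole ord hlt hβ
    set a' : Fin M → MvPolynomial (Fin n) R := fun i =>
      a i - (∑ j, e j * (Q j i : MvPolynomial (Fin n) R)) + (∑ j, e j * U j i) with ha'_def
    have ha'A : ∀ i, a' i ∈ A := by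
      intro i
      exact A.add_mem (A.sub_mem (haA i) (A.sum_mem fun j _ => A.mul_mem (heA j) (Q j i).2))
        (A.sum_mem fun j _ => A.mul_mem (heA j) (hUA j i))
    have hterm : ∀ i, a' i * (g i : MvPolynomial (Fin n) R) =
        a i * (g i : MvPolynomial (Fin n) R) -
        (∑ j, e j * ((Q j i : MvPolynomial (Fin n) R) * (g i : MvPolynomial (Fin n) R))) +
        (∑ j, e j * (U j i * (g i : MvPolynomial (Fin n) R))) := by
      intro i
      rw [ha'_def]
      rw [add_mul, sub_mul, Finset.sum_mul, Finset.sum_mul]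
      rw [Finset.sum_congr rfl (fun j _ => mul_assoc (e j) _ _),
        Finset.sum_congr rfl (fun j _ => mul_assoc (e j) (U j i) _)]
    have hsum' : h = ∑ i, a' i * (g i : MvPolynomial (Fin n) R) := by
      rw [Finset.sum_congr rfl (fun i _ => hterm i)]
      rw [Finset.sum_add_distrib, Finset.sum_sub_distrib]
      rw [Finset.sum_comm (f := fun i j => e j * ((Q j i : MvPolynomial (Fin n) R) *
        (g i : MvPolynomial (Fin n) R)))]
      rw [Finset.sum_comm (f := fun i j => e j * (U j i * (g i : MvPolynomial (Fin n) R)))]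
      rw [Finset.sum_congr rfl (fun j _ => (Finset.mul_sum Finset.univ
        (fun i => (Q j i : MvPolynomial (Fin n) R) * (g i : MvPolynomial (Fin n) R))
        (e j)).symm)]
      rw [Finset.sum_congr rfl (fun j _ => (Finset.mul_sum Finset.univ
        (fun i => U j i * (g i : MvPolynomial (Fin n) R)) (e j)).symm)]
      rw [Finset.sum_congr rfl (fun j _ => by rw [← hUsum j] :
        ∀ j ∈ Finset.univ, e j * ∑ i, U j i * (g i : MvPolynomial (Fin n) R) = e j * hpoly j)]
      rw [← hsum]
      have : ∑ j, e j * ∑ i, (Q j i : MvPolynomial (Fin n) R) *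
          (g i : MvPolynomial (Fin n) R) = ∑ j, e j * hpoly j := rfl
      rw [this]
      ring
    have hstrict : ∀ i β, ord.lo.le δ β →
        (a' i * (g i : MvPolynomial (Fin n) R)).coeff β = 0 := by
      intro i β hβ
      rw [hterm i, MvPolynomial.coeff_add, MvPolynomial.coeff_sub,
        MvPolynomial.coeff_sum, MvPolynomial.coeff_sum]
      rw [Finset.sum_eq_zero (fun j _ => hEU0 j i β hβ), add_zero]
      rcases oeq_or_olt_of_ole ord hβ with rfl | hlt
      · rw [hKEY i, sub_self]
      · rw [(hbdd i).coeff_eq_zero ord hlt,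
          Finset.sum_eq_zero (fun j _ => hbddEQ j i β hlt), sub_self]
    have hex' : ∃ i, a' i * (g i : MvPolynomial (Fin n) R) ≠ 0 := by
      by_contra hall
      push_neg at hall
      exact hne (by rw [hsum']; exact Finset.sum_eq_zero fun i _ => hall i)
    obtain ⟨δ', hδ'bdd, i0, hi0ne, hi0lp⟩ := pickδ a' hex'
    have hδ'lt : ord.lo.lt δ' δ := by
      rw [← hi0lp]
      refine (not_ole ord).1 fun hle => ?_
      exact lc_ne_zero ord hi0ne (hstrict i0 _ hle)
    exact IH δ' hδ'lt h hA hne a' ha'A hsum' hδ'bdd x hx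
  · -- top case : lp h = δ and we conclude directly
    have hBddh : Bdd ord δ h := by
      rw [hsum]
      exact Bdd.sum ord fun i _ => hbdd i
    have hlph : ord.lp h = δ :=
      ole_antisymm ord (hBddh.lp_le ord hne)
        (le_lp ord (MvPolynomial.mem_support_iff.2 hcne))
    have hltmh : ord.ltm h = monomial δ (h.coeff δ) := by
      show monomial _ _ = _
      unfold TermOrder.lc
      rw [hlph]
    have hxval : (x : MvPolynomial (Fin n) R) =
        ∑ i ∈ S, ord.ltm (a i) * ord.ltm ((g i : MvPolynomial (Fin n) R)) := by
      rw [hx, hltmh, hsum_S]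
    have hxrep : x = ∑ i ∈ S, (⟨ord.ltm (a i), memLt _ (haA i)⟩ : LtAlg ord A) *
        (⟨ord.ltm ((g i : MvPolynomial (Fin n) R)), memLt _ (g i).2⟩ : LtAlg ord A) := by
      apply Subtype.ext
      push_cast
      exact hxval
    rw [hxrep]
    refine Ideal.sum_mem _ fun i hi => Ideal.mul_mem_left _ _ (Ideal.subset_span ?_)
    exact ⟨(g i : MvPolynomial (Fin n) R), ⟨g i, ⟨i, rfl⟩, rfl⟩, rfl⟩

end SGAux

set_option synthInstance.maxHeartbeats 1000000 in
set_option maxHeartbeats 2000000 in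
/-- SG-basis criterion.  Let `G = {g₁,…,g_M} ⊆ A` consist of
nonzero elements and let `Q = {Q₁,…,Q_N}` be an lt-generating set for
`LtSyz*_A(G)` (each `lt(Q_j)` is a homogeneous syzygy of `Lt G`, and together
they generate the `R[Lt A]`-module `Syz(Lt G)`).  Then `G` is an SG-basis for
`⟨G⟩_A` iff each `∑ᵢ q_{j,i}·gᵢ` si-reduces to `0` via `G`. -/
theorem isSGBasis_iff_ltsyzygies_sireduce_zero {n : ℕ} {R : Type*} [CommRing R]
    [IsDomain R] [IsNoetherianRing R] (ord : TermOrder n)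
    (A : Subalgebra R (MvPolynomial (Fin n) R)) {M N : ℕ}
    (g : Fin M → A) (hg : ∀ i, (g i : MvPolynomial (Fin n) R) ≠ 0)
    (Q : Fin N → Fin M → A)
    (hQsyz : ∀ j, ∑ i, ord.ltm ((Q j i : MvPolynomial (Fin n) R)) *
      ord.ltm ((g i : MvPolynomial (Fin n) R)) = 0)
    (hQhom : ∀ j, ∃ α : Fin n →₀ ℕ, ∀ i,
      (ord.ltm ((Q j i : MvPolynomial (Fin n) R)) *
        ord.ltm ((g i : MvPolynomial (Fin n) R))).support ⊆ {α})
    (hQgen : ∀ b : Fin M → LtAlg ord A,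
      (∑ i, (b i : MvPolynomial (Fin n) R) * ord.ltm ((g i : MvPolynomial (Fin n) R))) = 0 →
      b ∈ Submodule.span (LtAlg ord A) (Set.range fun j => fun i => ltA ord A (Q j i))) :
    IsSGBasis ord A (Ideal.span (Set.range g)) (Set.range g) ↔
      ∀ j, SiReduce ord A (Subtype.val '' Set.range g)
        (∑ i, ((Q j i : MvPolynomial (Fin n) R)) * ((g i : MvPolynomial (Fin n) R))) 0 := by
  classical
  constructor
  · intro hSG j
    have hmem : (∑ i, Q j i * g i) ∈ Ideal.span (Set.range g) :=
      Ideal.sum_mem _ fun i _ => Ideal.mul_mem_left _ _ (Ideal.subset_span ⟨i, rfl⟩)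
    have hval : ((∑ i, Q j i * g i : A) : MvPolynomial (Fin n) R) =
        ∑ i, ((Q j i : MvPolynomial (Fin n) R)) * ((g i : MvPolynomial (Fin n) R)) := by
      push_cast
      rfl
    have hres := SGAux.sgb_sireduce ord g hg hSG _ hmem
    rw [hval] at hres
    exact hres
  · intro hred
    unfold IsSGBasis
    apply le_antisymm
    · refine Ideal.span_mono ?_
      rintro x ⟨p, ⟨w, hw, rfl⟩, hval⟩
      exact ⟨_, ⟨w, Ideal.subset_span hw, rfl⟩, hval⟩
    · rw [Ideal.span_le]
      rintro x ⟨p, ⟨hh, hhI, rfl⟩, hxval⟩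
      by_cases h0 : (hh : MvPolynomial (Fin n) R) = 0
      · have hx0 : x = 0 := by
          apply Subtype.ext
          rw [← hxval, h0]
          simp
        rw [hx0]
        exact Ideal.zero_mem _
      · obtain ⟨aa, haa⟩ := Ideal.mem_span_range_iff_exists_fun.1 hhI
        have hrep : (hh : MvPolynomial (Fin n) R) =
            ∑ i, ((aa i : MvPolynomial (Fin n) R)) * ((g i : MvPolynomial (Fin n) R)) := by
          have hv := congrArg (Subtype.val) haa
          push_cast at hv
          rw [← hv]
        exact SGAux.rep_descent ord g hg Q hQsyz hQhom hQgen hred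
          (hh : MvPolynomial (Fin n) R) hh.2 h0
          ⟨fun i => (aa i : MvPolynomial (Fin n) R), fun i => (aa i).2, hrep⟩
          x hxval.symm
end
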